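/- arXiv:1103.0430 — 6 statements merged into one kernel-verified Lean document; each statement's English description precedes it below -/
import Mathlib

section
/- Let n ≥ 2 be an integer, let γ ∈ ℝ, and let φ : ℝⁿ → ℝ be given by φ(x) = Σ_{j=0}^{n} c_j E_j(x) for real coefficients c_0, c_1, …, c_n, where c_j ≠ 0 for at least one j ≥ 2 (i.e., φ has degree at least two). If a point a ∈ H = {x ∈ ℝⁿ : x_1 + ⋯ + x_n = γ} is a local extremum of the restriction of φ to H (meaning there is a neighborhood N of a in H with φ(x) ≥ φ(a) for all x ∈ N, or φ(x) ≤ φ(a) for all x ∈ N), then a = (γ/n, γ/n, …, γ/n). -/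
/-- The `j`-th elementary symmetric polynomial of `x : Fin n → ℝ`
(`E 0 = 1`, `E j = 0` for `j > n`). -/
noncomputable def esymm (n j : ℕ) (x : Fin n → ℝ) : ℝ :=
  ∑ t ∈ Finset.powersetCard j (Finset.univ : Finset (Fin n)), ∏ i ∈ t, x i

open Finset

lemma mesymm_zero (s : Multiset ℝ) : s.esymm 0 = 1 := by
  simp [Multiset.esymm]

lemma mesymm_nil (k : ℕ) (hk : k ≠ 0) : (0 : Multiset ℝ).esymm k = 0 := by
  obtain ⟨k, rfl⟩ := Nat.exists_eq_succ_of_ne_zero hk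
  simp [Multiset.esymm, Multiset.powersetCard_zero_right]

lemma mesymm_cons (a : ℝ) (s : Multiset ℝ) (k : ℕ) :
    (a ::ₘ s).esymm (k + 1) = s.esymm (k + 1) + a * s.esymm k := by
  simp [Multiset.esymm, Multiset.powersetCard_cons, Multiset.sum_map_mul_left,
    Multiset.map_map, Function.comp_def]

/-- `ψ m s = ∑_{j≤n, j≥m} c j E_{j-m}(s)`. -/
noncomputable def psi (n : ℕ) (c : ℕ → ℝ) (m : ℕ) (s : Multiset ℝ) : ℝ :=
  ∑ i ∈ Finset.range (n + 1 - m), c (m + i) * s.esymm i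

lemma psi_cons (n : ℕ) (c : ℕ → ℝ) (m : ℕ) (u : ℝ) (s : Multiset ℝ) :
    psi n c m (u ::ₘ s) = psi n c m s + u * psi n c (m + 1) s := by
  rcases le_or_gt m n with h | h
  · have h1 : n + 1 - m = (n - m) + 1 := by omega
    have h2 : n + 1 - (m + 1) = n - m := by omega
    rw [psi, psi, psi, h1, h2, Finset.sum_range_succ', Finset.sum_range_succ',
      Finset.mul_sum]
    simp only [mesymm_cons, mesymm_zero, mul_one, mul_add]
    rw [Finset.sum_add_distrib]
    have : ∀ i : ℕ, m + 1 + i = m + (i + 1) := fun i => by omega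
    simp only [this]
    rw [Finset.sum_congr rfl
      (fun x (_ : x ∈ Finset.range (n - m)) =>
        (by ring : u * (c (m + (x + 1)) * s.esymm x) = c (m + (x + 1)) * (u * s.esymm x)))]
    ring
  · have h1 : n + 1 - m = 0 := by omega
    have h2 : n + 1 - (m + 1) = 0 := by omega
    simp [psi, h1, h2]

lemma psi_nil (n : ℕ) (c : ℕ → ℝ) (m : ℕ) (hm : m ≤ n) :
    psi n c m 0 = c m := by
  rw [psi, Finset.sum_eq_single 0]
  · simp [mesymm_zero]
  · intro i _ hi
    obtain ⟨i, rfl⟩ := Nat.exists_eq_succ_of_ne_zero hi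
    simp [mesymm_nil _ (Nat.succ_ne_zero i)]
  · intro h
    exfalso; apply h; simp [Finset.mem_range]; omega

lemma quad_nonneg {B C ε : ℝ} (hε : 0 < ε)
    (h : ∀ t : ℝ, |t| < ε → 0 ≤ B * t + C * t ^ 2) : B = 0 := by
  by_contra hB
  set δ := min (ε / 2) (|B| / (2 * (|C| + 1))) with hδdef
  have hC1 : (0:ℝ) < |C| + 1 := by positivity
  have hδpos : 0 < δ := lt_min (by linarith) (div_pos (abs_pos.2 hB) (by positivity))
  have hδε : δ < ε := lt_of_le_of_lt (min_le_left _ _) (by linarith)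
  have h1 : δ ≤ |B| / (2 * (|C| + 1)) := min_le_right _ _
  have hδB : |C| * δ ≤ |B| / 2 := by
    have h2 : (|C| + 1) * δ ≤ (|C| + 1) * (|B| / (2 * (|C| + 1))) := by
      exact mul_le_mul_of_nonneg_left h1 (by positivity)
    have h3 : (|C| + 1) * (|B| / (2 * (|C| + 1))) = |B| / 2 := by
      field_simp
    nlinarith [abs_nonneg C]
  rcases lt_or_gt_of_ne hB with hBneg | hBpos
  · have hh := h δ (by rw [abs_of_pos hδpos]; exact hδε)
    have hCle : C * δ ^ 2 ≤ |C| * δ * δ := by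
      have := le_abs_self C
      nlinarith [sq_nonneg δ]
    have hBval : |B| = -B := abs_of_neg hBneg
    nlinarith
  · have hh := h (-δ) (by rw [abs_neg, abs_of_pos hδpos]; exact hδε)
    have hCle : C * (-δ) ^ 2 ≤ |C| * δ * δ := by
      have := le_abs_self C
      nlinarith [sq_nonneg δ]
    have hBval : |B| = B := abs_of_pos hBpos
    nlinarith

lemma lin_zero {A B δ : ℝ} (hδ : 0 < δ) (h : ∀ t : ℝ, |t| < δ → A + t * B = 0) :
    A = 0 ∧ B = 0 := by
  have h0 := h 0 (by simpa using hδ)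
  have h1 := h (δ / 2) (by rw [abs_of_pos (by linarith)]; linarith)
  constructor
  · linarith [h0]
  · have : A = 0 := by linarith [h0]
    rw [this] at h1
    have hδ2 : δ / 2 ≠ 0 := by positivity
    field_simp at h1
    rcases mul_eq_zero.1 (by linarith : δ * B = 0) with h | h
    · linarith
    · exact h

section Move

variable {n : ℕ}

/-- Move coordinate `i` by `+t` and coordinate `j` by `-t`. -/
noncomputable def mv (b : Fin n → ℝ) (i j : Fin n) (t : ℝ) : Fin n → ℝ :=
  Function.update (Function.update b i (b i + t)) j (b j - t)

lemma mv_apply_i {b : Fin n → ℝ} {i j : Fin n} {t : ℝ} (hij : i ≠ j) :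
    mv b i j t i = b i + t := by
  simp [mv, Function.update_of_ne hij]

lemma mv_apply_j {b : Fin n → ℝ} {i j : Fin n} {t : ℝ} : mv b i j t j = b j - t := by
  simp [mv]

lemma mv_apply_other {b : Fin n → ℝ} {i j p : Fin n} {t : ℝ}
    (hpi : p ≠ i) (hpj : p ≠ j) : mv b i j t p = b p := by
  simp [mv, Function.update_of_ne hpj, Function.update_of_ne hpi]

lemma mv_dist_apply {b : Fin n → ℝ} {i j p : Fin n} {t : ℝ} (hij : i ≠ j) :
    |mv b i j t p - b p| ≤ |t| := by
  rcases eq_or_ne p i with rfl | hpi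
  · rw [mv_apply_i hij]; simp
  rcases eq_or_ne p j with rfl | hpj
  · rw [mv_apply_j]; simp [abs_neg]
  · rw [mv_apply_other hpi hpj]; simp [abs_nonneg]

lemma dist_mv_le {b : Fin n → ℝ} {i j : Fin n} {t : ℝ} (hij : i ≠ j) :
    dist (mv b i j t) b ≤ |t| := by
  rw [dist_pi_le_iff (abs_nonneg t)]
  intro p
  rw [Real.dist_eq]
  exact mv_dist_apply hij

lemma sum_mv {b : Fin n → ℝ} {i j : Fin n} (hij : i ≠ j) (t : ℝ) :
    ∑ p, mv b i j t p = ∑ p, b p := by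
  have hj : j ∈ (univ : Finset (Fin n)) := mem_univ j
  have hi : i ∈ (univ : Finset (Fin n)) \ {j} := by simp [hij]
  rw [mv, Finset.sum_update_of_mem hj, Finset.sum_update_of_mem hi,
    Finset.sum_eq_add_sum_sdiff_singleton_of_mem hj b,
    Finset.sum_eq_add_sum_sdiff_singleton_of_mem hi b]
  ring

lemma map_split {s : Finset (Fin n)} {i : Fin n} (hi : i ∈ s) (b : Fin n → ℝ) :
    s.val.map b = b i ::ₘ (s.erase i).val.map b := by
  conv_lhs => rw [← Multiset.cons_erase (show i ∈ s.val from Finset.mem_def.mp hi)]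
  rw [Multiset.map_cons, Finset.erase_val]

lemma map_b_split {b : Fin n → ℝ} {i j : Fin n} (hij : i ≠ j) :
    (univ : Finset (Fin n)).val.map b
      = b i ::ₘ b j ::ₘ (((univ.erase i).erase j).val.map b) := by
  rw [map_split (mem_univ i) b,
    map_split (Finset.mem_erase.2 ⟨hij.symm, mem_univ j⟩) b]

lemma map_mv {b : Fin n → ℝ} {i j : Fin n} (hij : i ≠ j) (t : ℝ) :
    (univ : Finset (Fin n)).val.map (mv b i j t)
      = (b i + t) ::ₘ (b j - t) ::ₘ (((univ.erase i).erase j).val.map b) := by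
  rw [map_split (mem_univ i) (mv b i j t),
    map_split (Finset.mem_erase.2 ⟨hij.symm, mem_univ j⟩) (mv b i j t),
    mv_apply_i hij, mv_apply_j]
  congr 1
  congr 1
  apply Multiset.map_congr rfl
  intro p hp
  have hp' : p ∈ (univ.erase i).erase j := Finset.mem_def.mpr hp
  have h1 := Finset.mem_erase.1 hp'
  have h2 := Finset.mem_erase.1 h1.2
  exact mv_apply_other h2.1 h1.1

end Move

/-- The `j`-th elementary symmetric polynomial of `x : Fin n → ℝ` -/
noncomputable def esymm' (n j : ℕ) (x : Fin n → ℝ) : ℝ :=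
  ∑ t ∈ Finset.powersetCard j (Finset.univ : Finset (Fin n)), ∏ i ∈ t, x i

section Main

variable {n : ℕ} {c : ℕ → ℝ} {γ : ℝ} {φ : (Fin n → ℝ) → ℝ} {H : Set (Fin n → ℝ)}

/-- `b` is a local minimum point of `φ` on `H`, metric version. -/
def Good (φ : (Fin n → ℝ) → ℝ) (H : Set (Fin n → ℝ)) (b : Fin n → ℝ) : Prop :=
  b ∈ H ∧ ∃ ε > 0, ∀ y ∈ H, dist y b < ε → φ b ≤ φ y

lemma phi_eq (hφ : ∀ x, φ x = ∑ j ∈ Finset.range (n + 1), c j * esymm' n j x)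
    (x : Fin n → ℝ) : φ x = psi n c 0 ((univ : Finset (Fin n)).val.map x) := by
  rw [hφ, psi]
  apply Finset.sum_congr rfl
  intro j hj
  rw [Nat.zero_add, Finset.esymm_map_val]
  rfl

lemma phi_mv (hφ : ∀ x, φ x = ∑ j ∈ Finset.range (n + 1), c j * esymm' n j x)
    {b : Fin n → ℝ} {i j : Fin n} (hij : i ≠ j) (t : ℝ) :
    φ (mv b i j t) = φ b + ((b j - b i) * t - t ^ 2) *
      psi n c 2 (((univ.erase i).erase j).val.map b) := by
  rw [phi_eq hφ, phi_eq hφ, map_mv hij, map_b_split hij]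
  simp only [psi_cons]
  ring

lemma pair_step (hφ : ∀ x, φ x = ∑ j ∈ Finset.range (n + 1), c j * esymm' n j x)
    (hH : H = {x | ∑ i, x i = γ})
    {b : Fin n → ℝ} {i j : Fin n} (hb : Good φ H b) (hij : i ≠ j) (hne : b i ≠ b j) :
    psi n c 2 (((univ.erase i).erase j).val.map b) = 0 ∧
    ∃ δ > 0, ∀ t : ℝ, |t| < δ → Good φ H (mv b i j t) := by
  obtain ⟨hbH, ε, hε, hmin⟩ := hb
  set P := psi n c 2 (((univ.erase i).erase j).val.map b) with hP
  have hmem : ∀ t : ℝ, mv b i j t ∈ H := by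
    intro t
    rw [hH, Set.mem_setOf_eq, sum_mv hij t]
    rw [hH] at hbH
    exact hbH
  have key : ∀ t : ℝ, φ (mv b i j t) = φ b + ((b j - b i) * t - t ^ 2) * P :=
    fun t => phi_mv hφ hij t
  have h0 : (b j - b i) * P = 0 := by
    apply quad_nonneg hε
    intro t ht
    have h1 := hmin _ (hmem t) (lt_of_le_of_lt (dist_mv_le hij) ht)
    rw [key t] at h1
    have e : (b j - b i) * P * t + (-P) * t ^ 2 = ((b j - b i) * t - t ^ 2) * P := by
      ring
    rw [e]
    linarith
  have hPz : P = 0 := by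
    rcases mul_eq_zero.1 h0 with h | h
    · exact absurd (sub_eq_zero.1 h).symm hne
    · exact h
  refine ⟨hPz, ε / 2, by linarith, fun t ht => ?_⟩
  have heq : φ (mv b i j t) = φ b := by rw [key t, hPz]; ring
  refine ⟨hmem t, ε / 2, by linarith, fun y hy hyd => ?_⟩
  rw [heq]
  apply hmin y hy
  calc dist y b ≤ dist y (mv b i j t) + dist (mv b i j t) b := dist_triangle _ _ _
    _ < ε / 2 + ε / 2 := add_lt_add_of_lt_of_le hyd
        (le_trans (dist_mv_le hij) (le_of_lt ht))
    _ = ε := by ring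

lemma inj_perturb {b : Fin n → ℝ} (hinj : Function.Injective b) {i j : Fin n}
    (hij : i ≠ j) :
    ∃ δ > 0, ∀ t : ℝ, |t| < δ → Function.Injective (mv b i j t) := by
  set S := (univ.offDiag : Finset (Fin n × Fin n)).image (fun p => |b p.1 - b p.2|)
    with hSdef
  have hS : (i, j) ∈ (univ.offDiag : Finset (Fin n × Fin n)) := by
    simp [Finset.mem_offDiag, hij]
  have hSne : S.Nonempty := ⟨_, Finset.mem_image_of_mem _ hS⟩
  set m := S.min' hSne with hmdef
  have hmpos : 0 < m := by
    have hmem := S.min'_mem hSne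
    obtain ⟨p, hp, hpe⟩ := Finset.mem_image.1 hmem
    have hp12 : p.1 ≠ p.2 := (Finset.mem_offDiag.1 hp).2.2
    rw [hmdef, ← hpe]
    exact abs_pos.2 (sub_ne_zero.2 fun h => hp12 (hinj h))
  refine ⟨m / 3, by linarith, fun t ht p q hpq => ?_⟩
  by_contra hne
  have hm_le : m ≤ |b p - b q| := by
    have hpq_mem : ((p, q) : Fin n × Fin n) ∈ (univ.offDiag : Finset (Fin n × Fin n)) :=
      Finset.mem_offDiag.2 ⟨mem_univ _, mem_univ _, hne⟩
    exact S.min'_le _ (Finset.mem_image_of_mem _ hpq_mem)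
  have h1 := mv_dist_apply (b := b) (i := i) (j := j) (t := t) (p := p) hij
  have h2 := mv_dist_apply (b := b) (i := i) (j := j) (t := t) (p := q) hij
  have e : b p - b q = (b p - mv b i j t p) + (mv b i j t q - b q) := by
    rw [hpq]; ring
  have hd : |b p - b q| ≤ |t| + |t| := by
    calc |b p - b q| = |(b p - mv b i j t p) + (mv b i j t q - b q)| := by rw [e]
      _ ≤ |b p - mv b i j t p| + |mv b i j t q - b q| := abs_add_le _ _
      _ ≤ |t| + |t| := add_le_add (by rw [abs_sub_comm]; exact h1) h2
  have := abs_nonneg t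
  linarith

end Main

section Main2

variable {n : ℕ} {c : ℕ → ℝ} {γ : ℝ} {φ : (Fin n → ℝ) → ℝ} {H : Set (Fin n → ℝ)}

/-- From a non-constant local minimum we can reach a local minimum with
pairwise distinct coordinates. -/
lemma reach (hφ : ∀ x, φ x = ∑ j ∈ Finset.range (n + 1), c j * esymm' n j x)
    (hH : H = {x | ∑ i, x i = γ}) :
    ∀ (k : ℕ) (b : Fin n → ℝ), Good φ H b → (∃ p q : Fin n, b p ≠ b q) →
    ((univ.offDiag : Finset (Fin n × Fin n)).filter (fun z => b z.1 = b z.2)).card ≤ k →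
    ∃ b', Good φ H b' ∧ Function.Injective b' := by
  intro k
  induction k with
  | zero =>
    intro b hb _ hcard
    refine ⟨b, hb, fun p q hpq => ?_⟩
    by_contra hne
    have hmem : (p, q) ∈ (univ.offDiag : Finset (Fin n × Fin n)).filter
        (fun z => b z.1 = b z.2) :=
      Finset.mem_filter.2 ⟨Finset.mem_offDiag.2 ⟨mem_univ _, mem_univ _, hne⟩, hpq⟩
    have := Finset.card_pos.2 ⟨_, hmem⟩
    omega
  | succ k ih =>
    intro b hb hnc hcard
    set C := (univ.offDiag : Finset (Fin n × Fin n)).filter (fun z => b z.1 = b z.2)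
      with hCdef
    by_cases hC : C.card = 0
    · refine ⟨b, hb, fun p q hpq => ?_⟩
      by_contra hne
      have hmem : (p, q) ∈ C :=
        Finset.mem_filter.2 ⟨Finset.mem_offDiag.2 ⟨mem_univ _, mem_univ _, hne⟩, hpq⟩
      have := Finset.card_pos.2 ⟨_, hmem⟩
      omega
    · obtain ⟨z, hz⟩ := Finset.card_pos.1 (Nat.pos_of_ne_zero hC)
      obtain ⟨hzoff, hzeq⟩ := Finset.mem_filter.1 hz
      obtain ⟨-, -, hz12⟩ := Finset.mem_offDiag.1 hzoff
      -- find a coordinate with a different value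
      have hm : ∃ m : Fin n, b m ≠ b z.1 := by
        obtain ⟨r, s, hrs⟩ := hnc
        by_cases h : b r = b z.1
        · exact ⟨s, fun hs => hrs (by rw [h, hs])⟩
        · exact ⟨r, h⟩
      obtain ⟨m, hmne⟩ := hm
      have hpm : z.1 ≠ m := fun h => hmne (by rw [← h])
      obtain ⟨-, δ, hδ, hgood⟩ := pair_step hφ hH hb hpm (fun h => hmne h.symm)
      -- pick a good small parameter t
      set Bad : Finset ℝ := ((univ.image (fun r : Fin n => b r - b z.1)) ∪
        (univ.image (fun r : Fin n => b m - b r))) ∪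
        {(b m - b z.1) / 2, 0} with hBdef
      have hex : (Set.Ioo (0:ℝ) δ \ ↑Bad).Nonempty :=
        ((Set.Ioo_infinite hδ).diff (Bad.finite_toSet)).nonempty
      obtain ⟨t, htIoo, htBad⟩ := hex
      have ht0 : 0 < t := htIoo.1
      have htδ : |t| < δ := by rw [abs_of_pos ht0]; exact htIoo.2
      have hmemBad : ∀ s : ℝ,
          ((∃ r : Fin n, s = b r - b z.1) ∨ (∃ r : Fin n, s = b m - b r) ∨
            s = (b m - b z.1) / 2 ∨ s = 0) → s ∈ Bad := by
        intro s hs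
        simp only [hBdef, Finset.mem_union, Finset.mem_image, Finset.mem_insert,
          Finset.mem_singleton]
        rcases hs with ⟨r, h⟩ | ⟨r, h⟩ | h | h
        · exact Or.inl (Or.inl ⟨r, mem_univ r, h.symm⟩)
        · exact Or.inl (Or.inr ⟨r, mem_univ r, h.symm⟩)
        · exact Or.inr (Or.inl h)
        · exact Or.inr (Or.inr h)
      have hB1 : ∀ r : Fin n, t ≠ b r - b z.1 :=
        fun r h => htBad (hmemBad t (Or.inl ⟨r, h⟩))
      have hB2 : ∀ r : Fin n, t ≠ b m - b r :=
        fun r h => htBad (hmemBad t (Or.inr (Or.inl ⟨r, h⟩)))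
      have hB3 : t ≠ (b m - b z.1) / 2 :=
        fun h => htBad (hmemBad t (Or.inr (Or.inr (Or.inl h))))
      set b' := mv b z.1 m t with hb'def
      have hnew : ∀ x y : Fin n, x ≠ y → b' x = b' y →
          (x ≠ z.1 ∧ x ≠ m ∧ y ≠ z.1 ∧ y ≠ m ∧ b x = b y) := by
        intro x y hxy heq
        rcases eq_or_ne x z.1 with rfl | hxp
        · exfalso
          rcases eq_or_ne y m with rfl | hym
          · rw [hb'def, mv_apply_i hpm, mv_apply_j] at heq
            exact hB3 (by linarith)
          · rw [hb'def, mv_apply_i hpm, mv_apply_other hxy.symm hym] at heq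
            exact hB1 y (by linarith)
        rcases eq_or_ne x m with rfl | hxm
        · exfalso
          rcases eq_or_ne y z.1 with rfl | hyp
          · rw [hb'def, mv_apply_j, mv_apply_i hpm] at heq
            exact hB3 (by linarith)
          · rw [hb'def, mv_apply_j, mv_apply_other hyp hxy.symm] at heq
            exact hB2 y (by linarith)
        rcases eq_or_ne y z.1 with rfl | hyp
        · exfalso
          rw [hb'def, mv_apply_other hxp hxm, mv_apply_i hpm] at heq
          exact hB1 x (by linarith)
        rcases eq_or_ne y m with rfl | hym
        · exfalso
          rw [hb'def, mv_apply_other hxp hxm, mv_apply_j] at heq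
          exact hB2 x (by linarith)
        · rw [hb'def, mv_apply_other hxp hxm, mv_apply_other hyp hym] at heq
          exact ⟨hxp, hxm, hyp, hym, heq⟩
      set C' := (univ.offDiag : Finset (Fin n × Fin n)).filter
        (fun w => b' w.1 = b' w.2) with hC'def
      have hsub : C' ⊆ C := by
        intro w hw
        obtain ⟨hwoff, hweq⟩ := Finset.mem_filter.1 hw
        obtain ⟨-, -, hw12⟩ := Finset.mem_offDiag.1 hwoff
        exact Finset.mem_filter.2 ⟨hwoff, (hnew _ _ hw12 hweq).2.2.2.2⟩
      have hnotin : z ∉ C' := by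
        intro hzin
        obtain ⟨-, hzeq'⟩ := Finset.mem_filter.1 hzin
        exact (hnew _ _ hz12 hzeq').1 rfl
      have hlt : C'.card < C.card :=
        Finset.card_lt_card ((Finset.ssubset_iff_of_subset hsub).2 ⟨z, hz, hnotin⟩)
      have hne' : b' z.1 ≠ b' m := by
        rw [hb'def, mv_apply_i hpm, mv_apply_j]
        intro h
        exact hB3 (by linarith)
      exact ih b' (hgood t htδ) ⟨z.1, m, hne'⟩ (by rw [← hC'def]; omega)

end Main2

section Main3

variable {n : ℕ} {c : ℕ → ℝ} {γ : ℝ} {φ : (Fin n → ℝ) → ℝ} {H : Set (Fin n → ℝ)}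

lemma filter_succ_val {k : ℕ} (hk : k < n) :
    (univ.filter (fun p : Fin n => (p : ℕ) < k + 1)).val
      = (⟨k, hk⟩ : Fin n) ::ₘ (univ.filter (fun p : Fin n => (p : ℕ) < k)).val := by
  have hmem : (⟨k, hk⟩ : Fin n) ∈ univ.filter (fun p : Fin n => (p : ℕ) < k + 1) := by
    simp
  conv_lhs => rw [← Multiset.cons_erase (Finset.mem_def.mp hmem)]
  congr 1
  rw [← Finset.erase_val]
  congr 1
  ext p
  have hp := p.isLt
  simp only [Finset.mem_erase, Finset.mem_filter, Finset.mem_univ, true_and,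
    and_true, Fin.ext_iff, ne_eq]
  omega

lemma peel (hn : 2 ≤ n)
    (hφ : ∀ x, φ x = ∑ j ∈ Finset.range (n + 1), c j * esymm' n j x)
    (hH : H = {x | ∑ i, x i = γ}) :
    ∀ d : ℕ, d ≤ n - 2 → ∀ b : Fin n → ℝ, Good φ H b → Function.Injective b →
    ∀ m : ℕ, 2 ≤ m → m ≤ 2 + d →
    psi n c m ((univ.filter (fun p : Fin n => (p : ℕ) < n - 2 - d)).val.map b) = 0 := by
  intro d
  induction d with
  | zero =>
    intro _ b hb hinj m hm2 hm2'
    have hm : m = 2 := by omega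
    subst hm
    have hi2 : n - 2 < n := by omega
    have hi1 : n - 1 < n := by omega
    set i : Fin n := ⟨n - 2, hi2⟩ with hidef
    set j : Fin n := ⟨n - 1, hi1⟩ with hjdef
    have hij : i ≠ j := by
      intro h
      have := congrArg Fin.val h
      simp only [hidef, hjdef] at this
      omega
    obtain ⟨hψ, -⟩ := pair_step hφ hH hb hij (fun h => hij (hinj h))
    have hset : (univ.erase i).erase j
        = univ.filter (fun p : Fin n => (p : ℕ) < n - 2) := by
      ext p
      have hp := p.isLt
      simp only [Finset.mem_erase, Finset.mem_filter, Finset.mem_univ, true_and,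
        and_true, Fin.ext_iff, ne_eq, hidef, hjdef]
      omega
    rw [hset] at hψ
    exact hψ
  | succ d ihd =>
    intro hd b hb hinj m hm2 hm2'
    set k := n - 2 - (d + 1) with hkdef
    have hkn : k < n := by omega
    have hkn3 : k + 1 ≤ n - 2 := by omega
    set i : Fin n := ⟨k, hkn⟩ with hidef
    set j : Fin n := ⟨n - 1, by omega⟩ with hjdef
    have hij : i ≠ j := by
      intro h
      have := congrArg Fin.val h
      simp only [hidef, hjdef] at this
      omega
    obtain ⟨-, δ₁, hδ₁, hgood⟩ := pair_step hφ hH hb hij (fun h => hij (hinj h))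
    obtain ⟨δ₂, hδ₂, hinj'⟩ := inj_perturb hinj hij
    set δ := min δ₁ δ₂ with hδdef
    have hδ : 0 < δ := lt_min hδ₁ hδ₂
    set F := (univ.filter (fun p : Fin n => (p : ℕ) < k)).val.map b with hFdef
    have main : ∀ m' : ℕ, 2 ≤ m' → m' ≤ 2 + d →
        psi n c m' F = 0 ∧ psi n c (m' + 1) F = 0 := by
      intro m' h1 h2
      have hlin : ∀ t : ℝ, |t| < δ →
          (psi n c m' F + b i * psi n c (m' + 1) F) + t * psi n c (m' + 1) F = 0 := by
        intro t ht
        have hbt := ihd (by omega) (mv b i j t)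
          (hgood t (lt_of_lt_of_le ht (min_le_left _ _)))
          (hinj' t (lt_of_lt_of_le ht (min_le_right _ _))) m' h1 h2
        have e1 : n - 2 - d = k + 1 := by omega
        rw [e1] at hbt
        have e2 : (univ.filter (fun p : Fin n => (p : ℕ) < k + 1)).val.map (mv b i j t)
            = (b i + t) ::ₘ F := by
          rw [filter_succ_val hkn, Multiset.map_cons, ← hidef, mv_apply_i hij]
          congr 1
          rw [hFdef]
          apply Multiset.map_congr rfl
          intro p hp
          have hpk : (p : ℕ) < k :=
            (Finset.mem_filter.1 (Finset.mem_def.mpr hp)).2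
          apply mv_apply_other
          · intro h
            rw [h] at hpk
            have hiv : (i : ℕ) = k := rfl
            omega
          · intro h
            rw [h] at hpk
            have hjv : (j : ℕ) = n - 1 := rfl
            omega
        rw [e2, psi_cons] at hbt
        linear_combination hbt
      obtain ⟨hA, hB⟩ := lin_zero hδ hlin
      refine ⟨?_, hB⟩
      rw [hB, mul_zero, add_zero] at hA
      exact hA
    rcases Nat.lt_or_ge m (2 + d + 1) with hlt | hge
    · exact (main m hm2 (by omega)).1
    · have hm : m = 2 + d + 1 := by omega
      subst hm
      exact (main (2 + d) (by omega) le_rfl).2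

end Main3

theorem aux_min (n : ℕ) (hn : 2 ≤ n) (γ : ℝ) (c : ℕ → ℝ)
    (hdeg : ∃ j, 2 ≤ j ∧ j ≤ n ∧ c j ≠ 0)
    (φ : (Fin n → ℝ) → ℝ)
    (hφ : ∀ x, φ x = ∑ j ∈ Finset.range (n + 1), c j * esymm' n j x)
    (H : Set (Fin n → ℝ)) (hH : H = {x | ∑ i, x i = γ})
    (a : Fin n → ℝ) (ha : a ∈ H) (hmin : IsLocalMinOn φ H a) :
    a = fun _ => γ / n := by
  by_contra hne
  have hn0 : (n : ℝ) ≠ 0 := Nat.cast_ne_zero.2 (by omega)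
  have hnc : ∃ p q : Fin n, a p ≠ a q := by
    by_contra h
    push_neg at h
    apply hne
    funext p
    have hsum : ∑ i, a i = γ := by rw [hH] at ha; exact ha
    have hconst : ∑ i : Fin n, a i = (n : ℝ) * a p := by
      rw [Finset.sum_congr rfl (fun q _ => h q p), Finset.sum_const,
        Finset.card_univ, Fintype.card_fin, nsmul_eq_mul]
    rw [eq_div_iff hn0]
    linarith [hsum, hconst]
  have hgood : Good φ H a := by
    refine ⟨ha, ?_⟩
    obtain ⟨ε, hε, hsub⟩ := Metric.mem_nhdsWithin_iff.1 hmin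
    exact ⟨ε, hε, fun y hy hyd => hsub ⟨Metric.mem_ball.2 hyd, hy⟩⟩
  obtain ⟨b, hbg, hbinj⟩ := reach hφ hH _ a hgood hnc le_rfl
  obtain ⟨j, hj2, hjn, hcj⟩ := hdeg
  have hp := peel hn hφ hH (n - 2) le_rfl b hbg hbinj j hj2 (by omega)
  have hempty : (univ.filter (fun p : Fin n => (p : ℕ) < n - 2 - (n - 2)))
      = (∅ : Finset (Fin n)) := by
    ext p; simp
  rw [hempty] at hp
  simp only [Finset.empty_val, Multiset.map_zero] at hp
  rw [psi_nil n c j hjn] at hp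
  exact hcj hp

/-- Kovačec–Kuhlmann–Riener, Theorem 1: a real linear combination of elementary
symmetric polynomials of degree at least two has, on the hyperplane
`H = {x : E₁(x) = γ}`, at most the symmetric point `γ/n·(1,…,1)` as local extremum. -/
theorem extrema_on_hyperplane (n : ℕ) (hn : 2 ≤ n) (γ : ℝ) (c : ℕ → ℝ)
    (hdeg : ∃ j, 2 ≤ j ∧ j ≤ n ∧ c j ≠ 0)
    (φ : (Fin n → ℝ) → ℝ)
    (hφ : ∀ x, φ x = ∑ j ∈ Finset.range (n + 1), c j * esymm n j x)
    (H : Set (Fin n → ℝ)) (hH : H = {x | ∑ i, x i = γ})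
    (a : Fin n → ℝ) (ha : a ∈ H)
    (hext : IsLocalMinOn φ H a ∨ IsLocalMaxOn φ H a) :
    a = fun _ => γ / n := by
  have hφ' : ∀ x, φ x = ∑ j ∈ Finset.range (n + 1), c j * esymm' n j x := hφ
  rcases hext with hmin | hmax
  · exact aux_min n hn γ c hdeg φ hφ' H hH a ha hmin
  · refine aux_min n hn γ (fun j => -c j) ?_ (fun x => -φ x) ?_ H hH a ha hmax.neg
    · obtain ⟨j, h1, h2, h3⟩ := hdeg
      exact ⟨j, h1, h2, neg_ne_zero.2 h3⟩
    · intro x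
      show -φ x = ∑ j ∈ Finset.range (n + 1), -c j * esymm' n j x
      rw [hφ' x, ← Finset.sum_neg_distrib]
      exact Finset.sum_congr rfl fun j _ => by ring
end

section
/- Let f ∈ ℝ[t] be a hyperbolic polynomial of degree n (all n roots of f, counted with multiplicity, are real) having exactly s distinct roots, where 1 ≤ s ≤ n−1, and suppose all roots of f lie in an open interval I = (α, β). Then there exists a polynomial g ∈ ℝ[t] of degree n − s and an ε₀ > 0 such that for every ε with 0 < ε < ε₀, both polynomials f + εg and f − εg are hyperbolic, have strictly more than s distinct roots, and all of their roots lie in I. -/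
open Polynomial

private lemma sign_flip {a b e : ℝ} (hab : a * b < 0) (ha : |e| < |a|) (hb : |e| < |b|) :
    (a + e) * (b + e) < 0 := by
  rcases mul_neg_iff.mp hab with ⟨ha', hb'⟩ | ⟨ha', hb'⟩
  · have h1 : |a| = a := abs_of_pos ha'
    have h2 : |b| = -b := abs_of_neg hb'
    have := abs_lt.mp ha
    have := abs_lt.mp hb
    have : 0 < a + e := by cases abs_lt.mp ha; rw [h1] at *; linarith
    have : b + e < 0 := by have := (abs_lt.mp hb).2; rw [h2] at this; linarith
    nlinarith
  · have h1 : |a| = -a := abs_of_neg ha'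
    have h2 : |b| = b := abs_of_pos hb'
    have : a + e < 0 := by have := (abs_lt.mp ha).2; rw [h1] at this; linarith
    have : 0 < b + e := by have := (abs_lt.mp hb).1; rw [h2] at this; linarith
    nlinarith

private lemma same_sign {u v : ℝ} (hv : v ≠ 0) (h : |u - v| < |v|) : 0 < u * v := by
  rcases lt_or_gt_of_ne hv with hv' | hv'
  · have h2 := (abs_lt.mp h).2
    rw [abs_of_neg hv'] at h2
    nlinarith
  · have h1 := (abs_lt.mp h).1
    rw [abs_of_pos hv'] at h1
    nlinarith

private lemma perturb_aux (c : ℝ) (hc : c ≠ 0) (T : Finset ℝ) (hT : T.Nonempty) (α β : ℝ)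
    (hαβ : ∀ r ∈ T, α < r ∧ r < β) :
    ∃ ε₀ > (0:ℝ), ∀ e : ℝ, e ≠ 0 → |e| < ε₀ →
      (C c * ∏ a ∈ T, (X - C a) + C e).roots.card = T.card ∧
      (C c * ∏ a ∈ T, (X - C a) + C e).roots.toFinset.card = T.card ∧
      ∀ x ∈ (C c * ∏ a ∈ T, (X - C a) + C e).roots, α < x ∧ x < β := by
  classical
  set p : Polynomial ℝ := C c * ∏ a ∈ T, (X - C a) with hp
  have hpdeg : p.natDegree = T.card := by
    rw [hp, natDegree_C_mul hc, natDegree_prod _ _ (fun i _ => X_sub_C_ne_zero i)]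
    simp [natDegree_X_sub_C]
  have key : ∀ r ∈ T, ∃ h : ℝ, 0 < h ∧ h < r - α ∧ h < β - r ∧
      (∀ r' ∈ T, r' ≠ r → 2 * h < |r - r'|) ∧
      p.eval (r - h) * p.eval (r + h) < 0 := by
    intro r hr
    set q : Polynomial ℝ := C c * ∏ a ∈ T.erase r, (X - C a) with hq
    have hpq : p = (X - C r) * q := by
      rw [hp, hq, ← Finset.mul_prod_erase T _ hr]; ring
    have hqr : q.eval r ≠ 0 := by
      rw [hq]
      simp only [eval_mul, eval_C, eval_prod, eval_sub, eval_X]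
      refine mul_ne_zero hc (Finset.prod_ne_zero_iff.mpr ?_)
      intro a ha
      have := Finset.ne_of_mem_erase ha
      intro h; apply this; linarith [sub_eq_zero.mp h]
    obtain ⟨δ, hδ0, hδ⟩ := Metric.continuousAt_iff.mp (q.continuous.continuousAt (x := r))
      |q.eval r| (abs_pos.mpr hqr)
    have hsign : ∀ x : ℝ, |x - r| < δ → 0 < q.eval x * q.eval r := by
      intro x hx
      exact same_sign hqr (by simpa [Real.dist_eq] using hδ (by simpa [Real.dist_eq] using hx))
    set m : ℝ := if hne : (T.erase r).Nonempty then (T.erase r).inf' hne (fun a => |r - a|) else 1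
      with hm
    have hm0 : 0 < m := by
      rw [hm]
      split
      · next hne =>
        apply (Finset.lt_inf'_iff _).mpr
        intro a ha
        have := Finset.ne_of_mem_erase ha
        exact abs_pos.mpr (sub_ne_zero.mpr (Ne.symm this))
      · norm_num
    have hmle : ∀ r' ∈ T, r' ≠ r → m ≤ |r - r'| := by
      intro r' hr' hne
      have hmem : r' ∈ T.erase r := Finset.mem_erase.mpr ⟨hne, hr'⟩
      rw [hm]
      rw [dif_pos ⟨r', hmem⟩]
      exact Finset.inf'_le _ hmem
    obtain ⟨hrα, hrβ⟩ := hαβ r hr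
    refine ⟨min (δ/2) (min (m/3) (min ((r-α)/2) ((β-r)/2))),
      lt_min (by linarith) (lt_min (by linarith) (lt_min (by linarith) (by linarith))), ?_, ?_, ?_, ?_⟩
    · calc min (δ/2) (min (m/3) (min ((r-α)/2) ((β-r)/2))) ≤ (r-α)/2 :=
            le_trans (min_le_right _ _) (le_trans (min_le_right _ _) (min_le_left _ _))
        _ < r - α := by linarith
    · calc min (δ/2) (min (m/3) (min ((r-α)/2) ((β-r)/2))) ≤ (β-r)/2 :=
            le_trans (min_le_right _ _) (le_trans (min_le_right _ _) (min_le_right _ _))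
        _ < β - r := by linarith
    · intro r' hr' hne
      have h1 : min (δ/2) (min (m/3) (min ((r-α)/2) ((β-r)/2))) ≤ m/3 :=
        le_trans (min_le_right _ _) (min_le_left _ _)
      have := hmle r' hr' hne
      linarith
    · set h : ℝ := min (δ/2) (min (m/3) (min ((r-α)/2) ((β-r)/2))) with hh
      have hh0 : 0 < h := by
        rw [hh]
        exact lt_min (by linarith) (lt_min (by linarith) (lt_min (by linarith) (by linarith)))
      have hhδ : h < δ := lt_of_le_of_lt (min_le_left _ _) (by linarith)
      have e1 : 0 < q.eval (r - h) * q.eval r := by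
        apply hsign
        rw [show r - h - r = -h by ring, abs_neg, abs_of_pos hh0]; linarith
      have e2 : 0 < q.eval (r + h) * q.eval r := by
        apply hsign
        rw [show r + h - r = h by ring, abs_of_pos hh0]; linarith
      have hev1 : p.eval (r - h) = -h * q.eval (r - h) := by
        rw [hpq]; simp only [eval_mul, eval_sub, eval_X, eval_C]; ring
      have hev2 : p.eval (r + h) = h * q.eval (r + h) := by
        rw [hpq]; simp only [eval_mul, eval_sub, eval_X, eval_C]; ring
      have hq1 : 0 < q.eval (r - h) * q.eval (r + h) := by
        rcases lt_or_gt_of_ne hqr with h' | h'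
        · have a1 : q.eval (r - h) < 0 := by by_contra hcon; push_neg at hcon; nlinarith
          have a2 : q.eval (r + h) < 0 := by by_contra hcon; push_neg at hcon; nlinarith
          nlinarith
        · have a1 : 0 < q.eval (r - h) := by by_contra hcon; push_neg at hcon; nlinarith
          have a2 : 0 < q.eval (r + h) := by by_contra hcon; push_neg at hcon; nlinarith
          nlinarith
      rw [hev1, hev2]
      nlinarith [mul_pos (mul_pos hh0 hh0) hq1]
  choose! H hH0 hHα hHβ hHgap hHsign using key
  refine ⟨T.inf' hT (fun r => min |p.eval (r - H r)| |p.eval (r + H r)|), ?_, ?_⟩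
  · apply (Finset.lt_inf'_iff _).mpr
    intro r hr
    have := hHsign r hr
    have h1 : p.eval (r - H r) ≠ 0 := by intro h; rw [h] at this; simp at this
    have h2 : p.eval (r + H r) ≠ 0 := by intro h; rw [h] at this; simp at this
    exact lt_min (abs_pos.mpr h1) (abs_pos.mpr h2)
  · intro e he0 heε
    set P : Polynomial ℝ := C c * ∏ a ∈ T, (X - C a) + C e with hP
    have hPp : P = p + C e := by rw [hP, hp]
    have hPdeg : P.natDegree = T.card := by rw [hPp, natDegree_add_C, hpdeg]
    have hP0 : P ≠ 0 := by
      intro h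
      rw [h] at hPdeg
      have := hT.card_pos
      simp at hPdeg; omega
    have hroot : ∀ r ∈ T, ∃ x, x ∈ Set.Ioo (r - H r) (r + H r) ∧ P.eval x = 0 := by
      intro r hr
      have h1 : |e| < |p.eval (r - H r)| :=
        lt_of_lt_of_le heε (le_trans (Finset.inf'_le _ hr) (min_le_left _ _))
      have h2 : |e| < |p.eval (r + H r)| :=
        lt_of_lt_of_le heε (le_trans (Finset.inf'_le _ hr) (min_le_right _ _))
      have hsign' : P.eval (r - H r) * P.eval (r + H r) < 0 := by
        rw [hPp]; simp only [eval_add, eval_C]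
        exact sign_flip (hHsign r hr) h1 h2
      have hle : r - H r ≤ r + H r := by have := hH0 r hr; linarith
      rcases mul_neg_iff.mp hsign' with ⟨hpos, hneg⟩ | ⟨hneg, hpos⟩
      · obtain ⟨x, hx, hx0⟩ := intermediate_value_Ioo' hle (P.continuous.continuousOn)
          (Set.mem_Ioo.mpr ⟨hneg, hpos⟩)
        exact ⟨x, hx, hx0⟩
      · obtain ⟨x, hx, hx0⟩ := intermediate_value_Ioo hle (P.continuous.continuousOn)
          (Set.mem_Ioo.mpr ⟨hneg, hpos⟩)
        exact ⟨x, hx, hx0⟩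
    choose! ρ hρmem hρ0 using hroot
    have hρroots : ∀ r ∈ T, ρ r ∈ P.roots.toFinset := by
      intro r hr
      exact Multiset.mem_toFinset.mpr (mem_roots'.mpr ⟨hP0, hρ0 r hr⟩)
    have hinj : Set.InjOn ρ ↑T := by
      intro r hr r' hr' heq
      by_contra hne
      obtain ⟨m1, m2⟩ := Set.mem_Ioo.mp (hρmem r hr)
      obtain ⟨m3, m4⟩ := Set.mem_Ioo.mp (hρmem r' hr')
      rw [heq] at m1 m2
      have g1 := hHgap r hr r' hr' (Ne.symm hne)
      have g2 := hHgap r' hr' r hr hne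
      rw [abs_sub_comm] at g2
      rcases abs_cases (r - r') with ⟨hc1, _⟩ | ⟨hc1, _⟩ <;> rw [hc1] at g1 g2 <;> linarith
    have hcard1 : T.card ≤ P.roots.toFinset.card := Finset.card_le_card_of_injOn ρ hρroots hinj
    have hcard2 : P.roots.toFinset.card ≤ Multiset.card P.roots := Multiset.toFinset_card_le _
    have hcard3 : Multiset.card P.roots ≤ T.card := hPdeg ▸ P.card_roots'
    have hcardeq : Multiset.card P.roots = T.card := le_antisymm hcard3 (le_trans hcard1 hcard2)
    have htfeq : P.roots.toFinset.card = T.card := le_antisymm (le_trans hcard2 hcard3) hcard1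
    refine ⟨hcardeq, htfeq, ?_⟩
    have himg : T.image ρ = P.roots.toFinset := by
      apply Finset.eq_of_subset_of_card_le
      · exact Finset.image_subset_iff.mpr hρroots
      · rw [Finset.card_image_of_injOn hinj, htfeq]
    intro x hx
    have hx' : x ∈ T.image ρ := himg ▸ Multiset.mem_toFinset.mpr hx
    obtain ⟨r, hr, rfl⟩ := Finset.mem_image.mp hx'
    obtain ⟨m1, m2⟩ := Set.mem_Ioo.mp (hρmem r hr)
    have := hHα r hr; have := hHβ r hr
    constructor <;> linarith

/-- Lemma 2 of Kovačec–Kuhlmann–Riener: if `f` is hyperbolic of degree `n`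
(i.e. has `n` real roots counted with multiplicity) with exactly `s` distinct
roots, `1 ≤ s ≤ n - 1`, all lying in the open interval `(α, β)`, then there is
a polynomial `g` of degree `n - s` such that for all small `ε > 0`, both
`f + ε g` and `f - ε g` are hyperbolic (all `n` roots real), have more than `s`
distinct roots, and all their roots lie in `(α, β)`. -/
theorem hyperbolic_perturbation (f : Polynomial ℝ) (n s : ℕ)
    (hdeg : f.natDegree = n)
    (hhyp : f.roots.card = n)
    (hs : f.roots.toFinset.card = s)
    (hs1 : 1 ≤ s) (hsn : s ≤ n - 1)
    (α β : ℝ)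
    (hI : ∀ x ∈ f.roots, α < x ∧ x < β) :
    ∃ g : Polynomial ℝ, g.natDegree = n - s ∧
      ∃ ε₀ > (0 : ℝ), ∀ ε : ℝ, 0 < ε → ε < ε₀ →
        ((f + C ε * g).roots.card = n ∧
          s < (f + C ε * g).roots.toFinset.card ∧
          ∀ x ∈ (f + C ε * g).roots, α < x ∧ x < β) ∧
        ((f - C ε * g).roots.card = n ∧
          s < (f - C ε * g).roots.toFinset.card ∧
          ∀ x ∈ (f - C ε * g).roots, α < x ∧ x < β) := by
  classical
  set T := f.roots.toFinset with hT
  have hcard_eq : Multiset.card f.roots = f.natDegree := by rw [hhyp, hdeg]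
  have hn2 : 2 ≤ n := by omega
  have hf0 : f ≠ 0 := by intro h; rw [h] at hdeg; simp at hdeg; omega
  set c := f.leadingCoeff with hc
  have hc0 : c ≠ 0 := leadingCoeff_ne_zero.mpr hf0
  set g : Polynomial ℝ := ∏ a ∈ T, (X - C a) ^ (f.roots.count a - 1) with hg
  have hcount : ∀ a ∈ T, 1 ≤ f.roots.count a := fun a ha =>
    Multiset.one_le_count_iff_mem.mpr (Multiset.mem_toFinset.mp ha)
  have hpow : ∀ a ∈ T, (X - C a : Polynomial ℝ) ^ (f.roots.count a) =
      (X - C a) ^ (f.roots.count a - 1) * (X - C a) := by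
    intro a ha
    rw [← pow_succ]
    congr 1
    have := hcount a ha
    omega
  have hfact : f = g * (C c * ∏ a ∈ T, (X - C a)) := by
    conv_lhs => rw [← C_leadingCoeff_mul_prod_multiset_X_sub_C hcard_eq]
    rw [Finset.prod_multiset_map_count, Finset.prod_congr rfl hpow, Finset.prod_mul_distrib]
    rw [hg]
    ring
  have hgmonic : g.Monic := monic_prod_of_monic _ _ (fun a _ => (monic_X_sub_C a).pow _)
  have hg0 : g ≠ 0 := hgmonic.ne_zero
  have hsum : ∑ a ∈ T, (f.roots.count a - 1) = n - s := by
    rw [Finset.sum_tsub_distrib _ (fun a ha => hcount a ha)]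
    rw [Multiset.toFinset_sum_count_eq, hhyp]
    simp [hs]
  have hgdeg : g.natDegree = n - s := by
    rw [hg, natDegree_prod _ _ (fun a _ => pow_ne_zero _ (X_sub_C_ne_zero a))]
    simp only [natDegree_pow, natDegree_X_sub_C, mul_one]
    exact hsum
  have hgroots : g.roots = T.val.bind (fun a => (f.roots.count a - 1) • {a}) := by
    rw [hg, roots_prod _ _ (by rw [← hg]; exact hg0)]
    apply Multiset.bind_congr
    intro a _
    rw [roots_pow, roots_X_sub_C]
  have hgroots_card : Multiset.card g.roots = n - s := by
    rw [hgroots, Multiset.card_bind]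
    rw [Multiset.map_congr rfl (fun a _ => by
      simp : ∀ a ∈ T.val, (Multiset.card ∘ fun a => (Multiset.count a f.roots - 1) •
        ({a} : Multiset ℝ)) a = Multiset.count a f.roots - 1)]
    exact hsum
  have hgsub : ∀ x ∈ g.roots, x ∈ f.roots := by
    intro x hx
    rw [hgroots] at hx
    obtain ⟨a, ha, hxa⟩ := Multiset.mem_bind.mp hx
    have hxeq : x = a := Multiset.mem_singleton.mp (Multiset.mem_of_mem_nsmul hxa)
    subst hxeq
    exact Multiset.mem_toFinset.mp ha
  have hgne : g.roots ≠ 0 := by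
    intro h
    rw [h] at hgroots_card
    simp at hgroots_card
    omega
  have hTne : T.Nonempty := Finset.card_pos.mp (by rw [hs]; omega)
  obtain ⟨ε₀, hε₀, hmain⟩ := perturb_aux c hc0 T hTne α β
    (fun r hr => hI r (Multiset.mem_toFinset.mp hr))
  refine ⟨g, hgdeg, ε₀, hε₀, ?_⟩
  have both : ∀ e : ℝ, e ≠ 0 → |e| < ε₀ →
      Multiset.card (g * (C c * ∏ a ∈ T, (X - C a) + C e)).roots = n ∧
      s < (g * (C c * ∏ a ∈ T, (X - C a) + C e)).roots.toFinset.card ∧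
      ∀ x ∈ (g * (C c * ∏ a ∈ T, (X - C a) + C e)).roots, α < x ∧ x < β := by
    intro e he0 heε
    obtain ⟨hc1, hc2, hc3⟩ := hmain e he0 heε
    set P : Polynomial ℝ := C c * ∏ a ∈ T, (X - C a) + C e with hP
    have hP0 : P ≠ 0 := by
      intro h
      rw [h] at hc1
      rw [hs] at hc1
      simp at hc1
      omega
    have hmul0 : g * P ≠ 0 := mul_ne_zero hg0 hP0
    have hroots : (g * P).roots = g.roots + P.roots := roots_mul hmul0
    have hdisj : Disjoint g.roots.toFinset P.roots.toFinset := by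
      rw [Finset.disjoint_left]
      intro a hag haP
      have haT : a ∈ T := Multiset.mem_toFinset.mpr (hgsub a (Multiset.mem_toFinset.mp hag))
      have haroot : P.eval a = 0 := (mem_roots'.mp (Multiset.mem_toFinset.mp haP)).2
      have hqa : eval a (∏ b ∈ T, (X - C b : Polynomial ℝ)) = 0 := by
        rw [eval_prod]
        apply Finset.prod_eq_zero haT
        simp
      rw [hP] at haroot
      simp only [eval_add, eval_mul, eval_C, hqa, mul_zero, zero_add] at haroot
      exact he0 haroot
    refine ⟨?_, ?_, ?_⟩
    · rw [hroots, Multiset.card_add, hgroots_card, hc1, hs]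
      omega
    · rw [hroots, Multiset.toFinset_add, Finset.card_union_of_disjoint hdisj, hc2, hs]
      have : 0 < g.roots.toFinset.card :=
        Finset.card_pos.mpr (Multiset.toFinset_nonempty.mpr hgne)
      omega
    · intro x hx
      rw [hroots] at hx
      rcases Multiset.mem_add.mp hx with hx | hx
      · exact hI x (hgsub x hx)
      · exact hc3 x hx
  intro ε hε hεε₀
  constructor
  · have heq : f + C ε * g = g * (C c * ∏ a ∈ T, (X - C a) + C ε) := by
      rw [hfact]; ring
    rw [heq]
    exact both ε (ne_of_gt hε) (by rw [abs_of_pos hε]; exact hεε₀)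
  · have heq : f - C ε * g = g * (C c * ∏ a ∈ T, (X - C a) + C (-ε)) := by
      rw [hfact, map_neg]; ring
    rw [heq]
    exact both (-ε) (by simpa using ne_of_gt hε) (by rw [abs_neg, abs_of_pos hε]; exact hεε₀)
end

section
/- Let n ≥ 2 and 1 ≤ k ≤ n−1 be integers, let γ_1, …, γ_k ∈ ℝ, and let φ : ℝⁿ → ℝ be given by φ(x) = Σ_{j=0}^{n} c_j E_j(x) with real coefficients c_j such that c_j ≠ 0 for at least one j ≥ k+1 (i.e., φ has degree at least k+1). Consider φ as a function on the real variety V = {x ∈ ℝⁿ : E_1(x) = γ_1, E_2(x) = γ_2, …, E_k(x) = γ_k}. Then every local extremum a = (a_1, …, a_n) of φ on V has at most k distinct components, i.e., the cardinality of the set {a_1, …, a_n} is at most k. -/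
open Polynomial Finset

-- helper: sign preservation
lemma same_sign_s2 {a b : ℝ} (ha : a ≠ 0) (h : |b - a| < |a|) : 0 < a * b := by
  rcases lt_or_gt_of_ne ha with h1 | h1
  · have : b < 0 := by
      have := abs_lt.1 h
      have : b - a < -a := by simpa [abs_of_neg h1] using this.2
      linarith
    exact mul_pos_of_neg_of_neg h1 this
  · have : 0 < b := by
      have := abs_lt.1 h
      have : -a < b - a := by simpa [abs_of_pos h1] using this.1
      linarith
    exact mul_pos h1 this

-- step 1: separation radius
lemma exists_gap (s : Finset ℝ) (ε : ℝ) (hε : 0 < ε) :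
    ∃ ε' : ℝ, 0 < ε' ∧ ε' ≤ ε ∧ ∀ u ∈ s, ∀ v ∈ s, u ≠ v → 2 * ε' ≤ |u - v| := by
  rcases s.offDiag.eq_empty_or_nonempty with h | h
  · refine ⟨ε, hε, le_refl _, fun u hu v hv huv => ?_⟩
    have : (u, v) ∈ s.offDiag := Finset.mem_offDiag.2 ⟨hu, hv, huv⟩
    simp [h] at this
  · set G := s.offDiag.inf' h (fun p => |p.1 - p.2|) with hG
    have hGpos : 0 < G := by
      rw [hG, Finset.lt_inf'_iff]
      rintro ⟨u, v⟩ hb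
      rw [Finset.mem_offDiag] at hb
      exact abs_pos.2 (sub_ne_zero.2 hb.2.2)
    refine ⟨min ε (G / 2), by positivity, min_le_left _ _, fun u hu v hv huv => ?_⟩
    have hm : (u, v) ∈ s.offDiag := Finset.mem_offDiag.2 ⟨hu, hv, huv⟩
    have h1 : G ≤ |u - v| := Finset.inf'_le (fun p => |p.1 - p.2|) hm
    have h2 : min ε (G / 2) ≤ G / 2 := min_le_right _ _
    linarith

lemma roots_perturb (s : Finset ℝ) (hs : s.Nonempty) (e : ℝ[X])
    (he : e.natDegree < s.card) (ε : ℝ) (hε : 0 < ε) :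
    ∃ δ : ℝ, 0 < δ ∧ ∀ t : ℝ, |t| < δ → ∃ w : ℝ → ℝ,
      (∀ v ∈ s, |w v - v| < ε) ∧ Set.InjOn w ↑s ∧
      (∏ v ∈ s, (X + C (w v))) = (∏ v ∈ s, (X + C v)) + C t * e := by
  obtain ⟨ε', hε'pos, hε'ε, hgap⟩ := exists_gap s ε hε
  set p : ℝ[X] := ∏ v ∈ s, (X + C v) with hp
  have hev : ∀ ξ : ℝ, p.eval ξ = ∏ v ∈ s, (ξ + v) := by
    intro ξ; rw [hp, eval_prod]; simp
  have hsign : ∀ v ∈ s, p.eval (-v + ε') * p.eval (-v - ε') < 0 := by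
    intro v hv
    rw [hev, hev, ← Finset.prod_mul_distrib]
    rw [Finset.prod_congr rfl (fun u _ => by ring :
      ∀ u ∈ s, (-v + ε' + u) * (-v - ε' + u) = (u - v) ^ 2 - ε' ^ 2)]
    rw [← Finset.mul_prod_erase s _ hv]
    have h1 : (v - v) ^ 2 - ε' ^ 2 < 0 := by
      simp only [sub_self]; nlinarith
    have h2 : 0 < ∏ u ∈ s.erase v, ((u - v) ^ 2 - ε' ^ 2) := by
      apply Finset.prod_pos
      intro u hu
      have hne : u ≠ v := Finset.ne_of_mem_erase hu
      have := hgap u (Finset.mem_of_mem_erase hu) v hv hne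
      have habs : ε' < |u - v| := by linarith
      have : ε' ^ 2 < (u - v) ^ 2 := by
        have := abs_nonneg (u - v)
        nlinarith [sq_abs (u - v)]
      linarith
    exact mul_neg_of_neg_of_pos h1 h2
  -- endpoints
  set T : Finset ℝ := s.image (fun v => -v + ε') ∪ s.image (fun v => -v - ε') with hT
  have hTne : T.Nonempty := by
    obtain ⟨v, hv⟩ := hs
    refine ⟨-v + ε', ?_⟩
    rw [hT, Finset.mem_union]
    exact Or.inl (Finset.mem_image.2 ⟨v, hv, rfl⟩)
  have hT0 : ∀ ξ ∈ T, p.eval ξ ≠ 0 := by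
    intro ξ hξ
    rw [hT, Finset.mem_union] at hξ
    rcases hξ with hξ | hξ <;> obtain ⟨v, hv, rfl⟩ := Finset.mem_image.1 hξ
    · intro h0
      have := hsign v hv; rw [h0, zero_mul] at this; exact lt_irrefl _ this
    · intro h0
      have := hsign v hv; rw [h0, mul_zero] at this; exact lt_irrefl _ this
  set δ : ℝ := T.inf' hTne (fun ξ => |p.eval ξ| / (|e.eval ξ| + 1)) with hδ
  have hδpos : 0 < δ := by
    rw [hδ, Finset.lt_inf'_iff]
    intro ξ hξ
    have := hT0 ξ hξ
    have : 0 < |p.eval ξ| := abs_pos.2 this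
    positivity
  refine ⟨δ, hδpos, fun t ht => ?_⟩
  set q : ℝ[X] := p + C t * e with hq
  have hqsame : ∀ ξ ∈ T, 0 < p.eval ξ * q.eval ξ := by
    intro ξ hξ
    apply same_sign_s2 (hT0 ξ hξ)
    have h1 : q.eval ξ - p.eval ξ = t * e.eval ξ := by
      simp only [hq, eval_add, eval_mul, eval_C]; ring
    rw [h1, abs_mul]
    have h2 : δ ≤ |p.eval ξ| / (|e.eval ξ| + 1) :=
      Finset.inf'_le (fun ξ => |p.eval ξ| / (|e.eval ξ| + 1)) hξ
    have h3 : 0 < |e.eval ξ| + 1 := by positivity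
    have h4 : δ * (|e.eval ξ| + 1) ≤ |p.eval ξ| := by
      rw [← le_div_iff₀ h3]; exact h2
    have h5 : |t| * |e.eval ξ| < δ * (|e.eval ξ| + 1) := by
      have := abs_nonneg t
      have := abs_nonneg (e.eval ξ)
      nlinarith
    linarith
  have hmemT1 : ∀ v ∈ s, (-v + ε') ∈ T := by
    intro v hv; rw [hT, Finset.mem_union]; exact Or.inl (Finset.mem_image.2 ⟨v, hv, rfl⟩)
  have hmemT2 : ∀ v ∈ s, (-v - ε') ∈ T := by
    intro v hv; rw [hT, Finset.mem_union]; exact Or.inr (Finset.mem_image.2 ⟨v, hv, rfl⟩)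
  have hqsign : ∀ v ∈ s, q.eval (-v + ε') * q.eval (-v - ε') < 0 := by
    intro v hv
    have h1 := hqsame _ (hmemT1 v hv)
    have h2 := hqsame _ (hmemT2 v hv)
    have h3 := hsign v hv
    nlinarith
  -- roots via IVT
  have hroot : ∀ v : ℝ, ∃ ζ : ℝ, v ∈ s → ζ ∈ Set.Ioo (-v - ε') (-v + ε') ∧ q.eval ζ = 0 := by
    intro v
    by_cases hv : v ∈ s
    · have hab : -v - ε' ≤ -v + ε' := by linarith
      have hcont : ContinuousOn (fun ξ => q.eval ξ) (Set.Icc (-v - ε') (-v + ε')) :=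
        q.continuousOn
      have hsgn := hqsign v hv
      rcases lt_trichotomy (q.eval (-v - ε')) 0 with hfa | hfa | hfa
      · have hfb : 0 < q.eval (-v + ε') := by nlinarith
        obtain ⟨ζ, hζI, hζ0⟩ := intermediate_value_Ioo hab hcont ⟨hfa, hfb⟩
        exact ⟨ζ, fun _ => ⟨hζI, hζ0⟩⟩
      · exfalso; rw [hfa, mul_zero] at hsgn; exact lt_irrefl _ hsgn
      · have hfb : q.eval (-v + ε') < 0 := by nlinarith
        obtain ⟨ζ, hζI, hζ0⟩ := intermediate_value_Ioo' hab hcont ⟨hfb, hfa⟩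
        exact ⟨ζ, fun _ => ⟨hζI, hζ0⟩⟩
    · exact ⟨0, fun h => absurd h hv⟩
  choose ζ hζ using hroot
  set w : ℝ → ℝ := fun v => -ζ v with hw
  have hwb : ∀ v ∈ s, |w v - v| < ε' := by
    intro v hv
    obtain ⟨⟨h1, h2⟩, _⟩ := hζ v hv
    rw [hw]; simp only
    rw [abs_lt]; constructor <;> nlinarith
  have hwroot : ∀ v ∈ s, q.eval (-(w v)) = 0 := by
    intro v hv; rw [hw]; simp only [neg_neg]; exact (hζ v hv).2
  have hinj : Set.InjOn w ↑s := by
    intro u hu v hv huv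
    by_contra hne
    have g := hgap u hu v hv hne
    have b1 := hwb u hu
    have b2 := hwb v hv
    rw [abs_lt] at b1 b2
    have key : |u - v| < 2 * ε' := by
      have huv2 : u - v = (u - w u) + (w v - v) := by rw [huv]; ring
      rw [abs_lt]; constructor <;> nlinarith [b1.1, b1.2, b2.1, b2.2]
    linarith
  refine ⟨w, fun v hv => lt_of_lt_of_le (hwb v hv) hε'ε, hinj, ?_⟩
  -- product identity
  set q' : ℝ[X] := ∏ v ∈ s, (X + C (w v)) with hq'
  have hq'root : ∀ v ∈ s, q'.eval (-(w v)) = 0 := by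
    intro v hv
    rw [hq', eval_prod]
    apply Finset.prod_eq_zero hv
    simp
  have hmonp : p.Monic := monic_prod_of_monic _ _ (fun v _ => monic_X_add_C v)
  have hmonq' : q'.Monic := monic_prod_of_monic _ _ (fun v _ => monic_X_add_C (w v))
  have hdegp : p.natDegree = s.card := by
    rw [hp, natDegree_prod _ _ (fun v _ => X_add_C_ne_zero v)]
    simp [natDegree_X_add_C]
  have hdegq' : q'.natDegree = s.card := by
    rw [hq', natDegree_prod _ _ (fun v _ => X_add_C_ne_zero (w v))]
    simp [natDegree_X_add_C]
  have hsub : (p - q').natDegree < s.card := by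
    by_cases hpq : p = q'
    · rw [hpq, sub_self, natDegree_zero]; exact hs.card_pos
    · have hd : (p - q').degree < p.degree := by
        apply degree_sub_lt
        · rw [degree_eq_natDegree hmonp.ne_zero, degree_eq_natDegree hmonq'.ne_zero,
            hdegp, hdegq']
        · exact hmonp.ne_zero
        · rw [hmonp.leadingCoeff, hmonq'.leadingCoeff]
      have hne : p - q' ≠ 0 := sub_ne_zero.2 hpq
      have := natDegree_lt_natDegree hne hd
      rwa [hdegp] at this
  have hd : (q - q').natDegree < s.card := by
    have h1 : q - q' = (p - q') + C t * e := by rw [hq]; ring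
    rw [h1]
    apply lt_of_le_of_lt (natDegree_add_le _ _)
    apply max_lt hsub
    apply lt_of_le_of_lt (natDegree_mul_le)
    simp only [natDegree_C, zero_add]
    exact he
  have hzero : q - q' = 0 := by
    apply Polynomial.eq_zero_of_natDegree_lt_card_of_eval_eq_zero' _
      (s.image (fun v => -(w v)))
    · intro ξ hξ
      obtain ⟨v, hv, rfl⟩ := Finset.mem_image.1 hξ
      simp [eval_sub, hwroot v hv, hq'root v hv]
    · rw [Finset.card_image_of_injOn (fun u hu v hv h => hinj hu hv (neg_injective h))]
      exact hd
  rw [hq] at hzero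
  exact (sub_eq_zero.mp hzero).symm

lemma esymm_eq_coeff {n : ℕ} (j : ℕ) (hj : j ≤ n) (x : Fin n → ℝ) :
    esymm n j x = (∏ i : Fin n, (X + C (x i))).coeff (n - j) := by
  have hcard : (Finset.univ : Finset (Fin n)).card = n := by simp
  rw [esymm, Finset.prod_X_add_C_coeff Finset.univ x (k := n - j) (by rw [hcard]; omega),
    show #(univ : Finset (Fin n)) - (n - j) = j from by rw [hcard]; omega]

lemma main_perturb {n : ℕ} (x : Fin n → ℝ) (S : Finset (Fin n))
    (hinj : Set.InjOn x ↑S) (himg : S.image x = Finset.image x Finset.univ)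
    (r : ℕ) (hr1 : 1 ≤ r) (hrm : r ≤ S.card) (ε : ℝ) (hε : 0 < ε) :
    ∃ δ : ℝ, 0 < δ ∧ ∀ t : ℝ, |t| < δ → ∃ x' : Fin n → ℝ,
      (∀ i, |x' i - x i| < ε) ∧
      (∀ j ≤ n, esymm n j x' = esymm n j x +
        t * (X ^ (S.card - r) * ∏ i ∈ Sᶜ, (X + C (x i))).coeff (n - j)) ∧
      (t ≠ 0 → r = S.card → Sᶜ.Nonempty →
        (Finset.image x Finset.univ).card + 1 ≤ (Finset.image x' Finset.univ).card) := by
  set s : Finset ℝ := S.image x with hsdef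
  have hScard : s.card = S.card := Finset.card_image_of_injOn hinj
  have hSne : S.Nonempty := Finset.card_pos.1 (by omega)
  have hsne : s.Nonempty := hSne.image x
  have hdeg : (X ^ (S.card - r) : ℝ[X]).natDegree < s.card := by
    rw [natDegree_X_pow, hScard]; omega
  obtain ⟨δ, hδpos, hδ⟩ := roots_perturb s hsne (X ^ (S.card - r)) hdeg ε hε
  refine ⟨δ, hδpos, fun t ht => ?_⟩
  obtain ⟨w, hwb, hwinj, hprodid⟩ := hδ t ht
  set x' : Fin n → ℝ := fun i => if i ∈ S then w (x i) else x i with hx'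
  have hpair : ∀ u ∈ S, ∀ v ∈ S, x u = x v → u = v := fun u hu v hv h => hinj hu hv h
  have hprod_s : ∏ v ∈ s, (X + C v) = ∏ i ∈ S, (X + C (x i)) := by
    rw [hsdef, Finset.prod_image hpair]
  have hprod_ws : ∏ v ∈ s, (X + C (w v)) = ∏ i ∈ S, (X + C (w (x i))) := by
    rw [hsdef, Finset.prod_image hpair]
  have hPx' : ∏ i : Fin n, (X + C (x' i)) =
      (∏ i : Fin n, (X + C (x i))) + C t * (X ^ (S.card - r) * ∏ i ∈ Sᶜ, (X + C (x i))) := by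
    rw [← Finset.prod_mul_prod_compl S (fun i => (X + C (x' i))),
        ← Finset.prod_mul_prod_compl S (fun i => (X + C (x i)))]
    have h1 : ∏ i ∈ S, (X + C (x' i)) = ∏ i ∈ S, (X + C (w (x i))) := by
      apply Finset.prod_congr rfl; intro i hi; rw [hx']; simp [hi]
    have h2 : ∏ i ∈ Sᶜ, (X + C (x' i)) = ∏ i ∈ Sᶜ, (X + C (x i)) := by
      apply Finset.prod_congr rfl; intro i hi
      rw [Finset.mem_compl] at hi
      rw [hx']; simp [hi]
    rw [h1, h2, ← hprod_ws, hprodid, hprod_s]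
    ring
  refine ⟨x', ?_, ?_, ?_⟩
  · intro i
    by_cases hi : i ∈ S
    · have : x i ∈ s := Finset.mem_image_of_mem x hi
      have := hwb _ this
      simpa [hx', hi] using this
    · simp [hx', hi, hε]
  · intro j hj
    rw [esymm_eq_coeff j hj, esymm_eq_coeff j hj, hPx', coeff_add, coeff_C_mul]
  · intro ht0 hrS hcne
    have hX0 : (X ^ (S.card - r) : ℝ[X]) = 1 := by rw [hrS]; simp
    rw [hX0, mul_one] at hprodid
    -- new values avoid all old values
    have havoid : ∀ v ∈ s, ∀ u ∈ s, w v ≠ u := by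
      intro v hv u hu hvu
      have h1 : (∏ v ∈ s, (X + C (w v))).eval (-u) = 0 := by
        rw [eval_prod]
        apply Finset.prod_eq_zero hv
        simp [hvu]
      have h2 : (∏ v ∈ s, (X + C v)).eval (-u) = 0 := by
        rw [eval_prod]
        apply Finset.prod_eq_zero hu
        simp
      rw [hprodid, eval_add, h2, zero_add, eval_C] at h1
      exact ht0 h1
    have hsub1 : s.image w ⊆ Finset.image x' Finset.univ := by
      intro v hv
      obtain ⟨u, hu, rfl⟩ := Finset.mem_image.1 hv
      obtain ⟨i, hi, rfl⟩ := Finset.mem_image.1 hu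
      apply Finset.mem_image.2 ⟨i, Finset.mem_univ i, ?_⟩
      rw [hx']; simp [hi]
    have hsub2 : Sᶜ.image x ⊆ Finset.image x' Finset.univ := by
      intro v hv
      obtain ⟨i, hi, rfl⟩ := Finset.mem_image.1 hv
      apply Finset.mem_image.2 ⟨i, Finset.mem_univ i, ?_⟩
      rw [Finset.mem_compl] at hi
      rw [hx']; simp [hi]
    have hdisj : Disjoint (s.image w) (Sᶜ.image x) := by
      rw [Finset.disjoint_left]
      intro v hv hv2
      obtain ⟨u, hu, rfl⟩ := Finset.mem_image.1 hv
      obtain ⟨i, hi, hxi⟩ := Finset.mem_image.1 hv2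
      have : x i ∈ s := by rw [himg]; exact Finset.mem_image_of_mem x (Finset.mem_univ i)
      exact havoid u hu (x i) this hxi.symm
    have hcard1 : (s.image w).card = s.card := Finset.card_image_of_injOn hwinj
    have hcard2 : 1 ≤ (Sᶜ.image x).card := Finset.card_pos.2 (hcne.image x)
    have hunion : (s.image w ∪ Sᶜ.image x).card = (s.image w).card + (Sᶜ.image x).card :=
      Finset.card_union_of_disjoint hdisj
    have hsub : s.image w ∪ Sᶜ.image x ⊆ Finset.image x' Finset.univ :=
      Finset.union_subset hsub1 hsub2
    have := Finset.card_le_card hsub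
    have hgoal := congrArg Finset.card himg
    omega

lemma exists_reps {n : ℕ} (hn : 0 < n) (x : Fin n → ℝ) :
    ∃ S : Finset (Fin n), Set.InjOn x ↑S ∧ S.image x = Finset.image x Finset.univ := by
  classical
  have hne : Nonempty (Fin n) := ⟨⟨0, hn⟩⟩
  set g : ℝ → Fin n := fun v => if h : ∃ i, x i = v then h.choose else Classical.arbitrary _
    with hgdef
  have hg : ∀ v ∈ Finset.image x Finset.univ, x (g v) = v := by
    intro v hv
    obtain ⟨i, _, rfl⟩ := Finset.mem_image.1 hv
    have h : ∃ i', x i' = x i := ⟨i, rfl⟩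
    simp only [hgdef, dif_pos h]
    exact h.choose_spec
  refine ⟨(Finset.image x Finset.univ).image g, ?_, ?_⟩
  · intro i hi i' hi' hx
    obtain ⟨v, hv, rfl⟩ := Finset.mem_image.1 (Finset.mem_coe.1 hi)
    obtain ⟨v', hv', rfl⟩ := Finset.mem_image.1 (Finset.mem_coe.1 hi')
    rw [hg v hv, hg v' hv'] at hx
    rw [hx]
  · rw [Finset.image_image]
    apply Finset.Subset.antisymm
    · intro v hv
      obtain ⟨u, hu, rfl⟩ := Finset.mem_image.1 hv
      rw [Function.comp_apply, hg u hu]; exact hu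
    · intro v hv
      exact Finset.mem_image.2 ⟨v, hv, by rw [Function.comp_apply, hg v hv]⟩

lemma step {n k : ℕ} (hn : 0 < n) (hk1 : 1 ≤ k)
    (γ c : ℕ → ℝ) (hdeg : ∃ j, k + 1 ≤ j ∧ j ≤ n ∧ c j ≠ 0)
    (φ : (Fin n → ℝ) → ℝ)
    (hφ : ∀ x, φ x = ∑ j ∈ Finset.range (n + 1), c j * esymm n j x)
    (V : Set (Fin n → ℝ))
    (hV : V = {x | ∀ j, 1 ≤ j → j ≤ k → esymm n j x = γ j})
    (x : Fin n → ℝ) (hx : x ∈ V)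
    (hext : IsLocalMinOn φ V x ∨ IsLocalMaxOn φ V x)
    (hm : k + 1 ≤ (Finset.image x Finset.univ).card) :
    ∃ x'', x'' ∈ V ∧ (IsLocalMinOn φ V x'' ∨ IsLocalMaxOn φ V x'') ∧
      (Finset.image x Finset.univ).card + 1 ≤ (Finset.image x'' Finset.univ).card := by
  classical
  obtain ⟨S, hinj, himg⟩ := exists_reps hn x
  set m := (Finset.image x Finset.univ).card with hmdef
  have hScard : S.card = m := by
    rw [hmdef, ← himg, Finset.card_image_of_injOn hinj]
  have hmn : m ≤ n := by
    rw [hmdef]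
    calc (Finset.image x Finset.univ).card ≤ (Finset.univ : Finset (Fin n)).card :=
          Finset.card_image_le
    _ = n := by simp
  set B : ℕ → ℝ[X] := fun r => X ^ (S.card - r) * ∏ i ∈ Sᶜ, (X + C (x i)) with hBdef
  set Cr : ℕ → ℝ := fun r => ∑ j ∈ Finset.range (n + 1), c j * (B r).coeff (n - j) with hCrdef
  -- coefficient vanishing for low esymm
  have hBdeg : ∀ r, r ≤ S.card → (B r).natDegree = (S.card - r) + (n - S.card) := by
    intro r hr
    rw [hBdef]
    simp only
    rw [Polynomial.Monic.natDegree_mul (monic_X_pow _)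
      (monic_prod_of_monic _ _ (fun i _ => monic_X_add_C (x i)))]
    congr 1
    · exact natDegree_X_pow _
    · rw [natDegree_prod _ _ (fun i _ => X_add_C_ne_zero (x i))]
      simp [natDegree_X_add_C, Finset.card_compl]
  have hF1 : ∀ r j, k + 1 ≤ r → r ≤ S.card → j ≤ k → (B r).coeff (n - j) = 0 := by
    intro r j hr1 hr2 hj
    apply coeff_eq_zero_of_natDegree_lt
    rw [hBdeg r hr2]
    have := hScard
    omega
  -- φ formula for perturbed points
  have hF2 : ∀ (r : ℕ) (t : ℝ) (x' : Fin n → ℝ),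
      (∀ j ≤ n, esymm n j x' = esymm n j x + t * (B r).coeff (n - j)) →
      φ x' = φ x + t * Cr r := by
    intro r t x' hes
    have h1 : ∀ j ∈ Finset.range (n + 1), c j * esymm n j x' =
        c j * esymm n j x + t * (c j * (B r).coeff (n - j)) := by
      intro j hj
      rw [hes j (Nat.lt_succ_iff.mp (Finset.mem_range.1 hj))]; ring
    rw [hφ x', hφ x, Finset.sum_congr rfl h1, Finset.sum_add_distrib, ← Finset.mul_sum, hCrdef]
  -- extract metric extremum data
  obtain ⟨σ, hσ, ε₀, hε₀pos, hloc⟩ : ∃ σ : ℝ, (σ = 1 ∨ σ = -1) ∧ ∃ ε₀ > 0,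
      ∀ y ∈ V, dist y x < ε₀ → σ * φ x ≤ σ * φ y := by
    rcases hext with h | h
    · obtain ⟨ε₀, hε₀, hsub⟩ := Metric.mem_nhdsWithin_iff.1 h
      exact ⟨1, Or.inl rfl, ε₀, hε₀, fun y hy hdy => by
        simpa using hsub ⟨Metric.mem_ball.2 hdy, hy⟩⟩
    · obtain ⟨ε₀, hε₀, hsub⟩ := Metric.mem_nhdsWithin_iff.1 h
      refine ⟨-1, Or.inr rfl, ε₀, hε₀, fun y hy hdy => ?_⟩
      have : φ y ≤ φ x := by simpa using hsub ⟨Metric.mem_ball.2 hdy, hy⟩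
      linarith
  have hσsq : σ * σ = 1 := by rcases hσ with rfl | rfl <;> norm_num
  by_cases hA : ∃ r, k + 1 ≤ r ∧ r ≤ S.card ∧ Cr r ≠ 0
  · -- contradiction case: φ strictly varies
    exfalso
    obtain ⟨r, hr1, hr2, hCr⟩ := hA
    obtain ⟨δ, hδpos, hδ⟩ := main_perturb x S hinj himg r (by omega) hr2 ε₀ hε₀pos
    set t : ℝ := -(σ * Cr r) * (δ / (2 * |Cr r|)) with htdef
    have habs : |t| = δ / 2 := by
      rw [htdef, abs_mul, abs_neg, abs_mul, abs_div, abs_mul]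
      rcases hσ with rfl | rfl <;>
      · rw [abs_of_pos hδpos]
        have h2 : |Cr r| ≠ 0 := abs_ne_zero.2 hCr
        field_simp
        simp only [abs_abs, abs_one, abs_neg, abs_two]
        ring
    have ht : |t| < δ := by rw [habs]; linarith
    obtain ⟨x', hclose, hes, _⟩ := hδ t ht
    have hx'V : x' ∈ V := by
      rw [hV]
      intro j hj1 hjk
      have := hes j (by omega)
      rw [hF1 r j hr1 hr2 hjk, mul_zero, add_zero] at this
      rw [this]
      rw [hV] at hx
      exact hx j hj1 hjk
    have hdist : dist x' x < ε₀ := by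
      rw [dist_pi_lt_iff hε₀pos]
      intro i
      rw [Real.dist_eq]
      exact hclose i
    have hφ' : φ x' = φ x + t * Cr r := hF2 r t x' hes
    have hneg : σ * (t * Cr r) < 0 := by
      rw [htdef]
      have h1 : 0 < |Cr r| := abs_pos.2 hCr
      have h2 : σ * (-(σ * Cr r) * (δ / (2 * |Cr r|)) * Cr r)
          = -((σ * σ) * (Cr r * Cr r) * (δ / (2 * |Cr r|))) := by ring
      rw [h2, hσsq, one_mul]
      have h3 : 0 < Cr r * Cr r := mul_self_pos.2 hCr
      have h4 : 0 < δ / (2 * |Cr r|) := by positivity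
      nlinarith
    have := hloc x' hx'V hdist
    rw [hφ'] at this
    nlinarith
  · -- all derivatives vanish
    push_neg at hA
    by_cases hmn' : m = n
    · exfalso
      obtain ⟨j0, hj01, hj02, hj03⟩ := hdeg
      have hScomp : Sᶜ = (∅ : Finset (Fin n)) := by
        rw [← Finset.card_eq_zero, Finset.card_compl]
        simp [hScard, hmn']
      have hCj0 : Cr j0 = c j0 := by
        rw [hCrdef]
        simp only
        rw [Finset.sum_eq_single j0]
        · rw [hBdef]; simp only [hScomp, Finset.prod_empty, mul_one, coeff_X_pow]
          rw [if_pos (by omega), mul_one]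
        · intro j hj hne
          rw [hBdef]; simp only [hScomp, Finset.prod_empty, mul_one, coeff_X_pow]
          rw [if_neg (by rw [Finset.mem_range] at hj; omega), mul_zero]
        · intro h
          exact absurd (Finset.mem_range.2 (by omega)) h
      exact hj03 (by rw [← hCj0]; exact hA j0 hj01 (by omega))
    · -- m < n : move to a point with more distinct values
      have hmltn : m < n := lt_of_le_of_ne hmn hmn'
      obtain ⟨δ, hδpos, hδ⟩ := main_perturb x S hinj himg S.card (by omega) (le_refl _)
        (ε₀ / 2) (by positivity)
      obtain ⟨x'', hclose, hes, hcard⟩ := hδ (δ / 2) (by rw [abs_of_pos (by positivity)]; linarith)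
      have hx''V : x'' ∈ V := by
        rw [hV]
        intro j hj1 hjk
        have := hes j (by omega)
        rw [hF1 S.card j (by omega) (le_refl _) hjk, mul_zero, add_zero] at this
        rw [this]
        rw [hV] at hx
        exact hx j hj1 hjk
      have hφeq : φ x'' = φ x := by
        have := hF2 S.card (δ / 2) x'' hes
        rw [hA S.card (by omega) (le_refl _), mul_zero, add_zero] at this
        exact this
      have hdist : dist x'' x < ε₀ / 2 := by
        rw [dist_pi_lt_iff (by positivity)]
        intro i
        rw [Real.dist_eq]
        exact hclose i
      have hcne : Sᶜ.Nonempty := by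
        rw [← Finset.card_pos, Finset.card_compl]
        simp [hScard]
        omega
      have hcard' := hcard (by positivity) rfl hcne
      refine ⟨x'', hx''V, ?_, hcard'⟩
      -- x'' is a local extremum of the same type
      have hloc'' : ∀ y ∈ V, dist y x'' < ε₀ / 2 → σ * φ x'' ≤ σ * φ y := by
        intro y hy hdy
        rw [hφeq]
        apply hloc y hy
        calc dist y x ≤ dist y x'' + dist x'' x := dist_triangle _ _ _
        _ < ε₀ / 2 + ε₀ / 2 := by linarith
        _ = ε₀ := by ring
      rcases hσ with rfl | rfl
      · left
        refine Metric.mem_nhdsWithin_iff.2 ⟨ε₀ / 2, by positivity, ?_⟩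
        rintro y ⟨hy1, hy2⟩
        have := hloc'' y hy2 (Metric.mem_ball.1 hy1)
        simpa using this
      · right
        refine Metric.mem_nhdsWithin_iff.2 ⟨ε₀ / 2, by positivity, ?_⟩
        rintro y ⟨hy1, hy2⟩
        have := hloc'' y hy2 (Metric.mem_ball.1 hy1)
        simp only [neg_mul, neg_le_neg_iff] at this
        simpa using this

/-- Kovačec–Kuhlmann–Riener, Theorem 3: if `φ` is a real linear combination of
elementary symmetric polynomials of degree at least `k + 1`, considered on the
variety `V = {x : E₁(x) = γ₁, …, E_k(x) = γ_k}`, then every local extremum `a`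
of `φ` on `V` has at most `k` distinct components. -/
theorem extrema_on_variety (n k : ℕ) (hn : 2 ≤ n) (hk1 : 1 ≤ k) (hkn : k ≤ n - 1)
    (γ : ℕ → ℝ) (c : ℕ → ℝ)
    (hdeg : ∃ j, k + 1 ≤ j ∧ j ≤ n ∧ c j ≠ 0)
    (φ : (Fin n → ℝ) → ℝ)
    (hφ : ∀ x, φ x = ∑ j ∈ Finset.range (n + 1), c j * esymm n j x)
    (V : Set (Fin n → ℝ))
    (hV : V = {x | ∀ j, 1 ≤ j → j ≤ k → esymm n j x = γ j})
    (a : Fin n → ℝ) (ha : a ∈ V)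
    (hext : IsLocalMinOn φ V a ∨ IsLocalMaxOn φ V a) :
    (Finset.image a Finset.univ).card ≤ k := by
  have hcard_le : ∀ y : Fin n → ℝ, (Finset.image y Finset.univ).card ≤ n := by
    intro y
    calc (Finset.image y Finset.univ).card ≤ (Finset.univ : Finset (Fin n)).card :=
        Finset.card_image_le
    _ = n := by simp
  suffices H : ∀ d : ℕ, ∀ x : Fin n → ℝ, x ∈ V →
      (IsLocalMinOn φ V x ∨ IsLocalMaxOn φ V x) →
      n ≤ (Finset.image x Finset.univ).card + d →
      (Finset.image x Finset.univ).card ≤ k by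
    exact H n a ha hext (by omega)
  intro d
  induction d with
  | zero =>
    intro x hx hx_ext hb
    by_contra hcon
    obtain ⟨x'', _, _, hc⟩ := step (by omega) hk1 γ c hdeg φ hφ V hV x hx hx_ext (by omega)
    have := hcard_le x''
    have := hcard_le x
    omega
  | succ d ih =>
    intro x hx hx_ext hb
    by_contra hcon
    obtain ⟨x'', hV'', hext'', hc⟩ := step (by omega) hk1 γ c hdeg φ hφ V hV x hx hx_ext
      (by omega)
    have h2 := ih x'' hV'' hext'' (by omega)
    omega
end

section
/- Let a_i < b_i (i = 1, …, n) and γ be real numbers, and let D' = {x ∈ ℝⁿ : a_i ≤ x_i ≤ b_i for all i, and x_1 + ⋯ + x_n = γ}. A subset F of ℝⁿ is a nonempty face of the polytope D' (i.e., F is nonempty and there exists a linear functional ℓ : ℝⁿ → ℝ such that F = {x ∈ D' : ℓ(y) ≤ ℓ(x) for all y ∈ D'}) if and only if F is nonempty and there exist a subset K ⊆ {1, …, n} and values u_l ∈ {a_l, b_l} for each l ∈ K^c = {1,…,n} \ K such that F = {x ∈ ℝⁿ : x_l = u_l for all l ∈ K^c, a_k ≤ x_k ≤ b_k for all k ∈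 K, and Σ_{k∈K} x_k + Σ_{l∈K^c} u_l = γ}. -/
open Finset in
private lemma face_core {n : ℕ} {a b : Fin n → ℝ} (hab : ∀ i, a i < b i) {γ : ℝ}
    (ℓ : (Fin n → ℝ) →ₗ[ℝ] ℝ) (lam : ℝ) (K : Finset (Fin n)) (u : Fin n → ℝ)
    (hcK : ∀ i ∈ K, ℓ (fun j => if i = j then (1:ℝ) else 0) = lam)
    (hu : ∀ l ∉ K, (lam < ℓ (fun j => if l = j then (1:ℝ) else 0) ∧ u l = b l) ∨
                   (ℓ (fun j => if l = j then (1:ℝ) else 0) < lam ∧ u l = a l))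
    (x0 : Fin n → ℝ)
    (hx0 : (∀ i, a i ≤ x0 i ∧ x0 i ≤ b i) ∧ ∑ i, x0 i = γ)
    (hx0u : ∀ l ∉ K, x0 l = u l) :
    {x ∈ {x : Fin n → ℝ | (∀ i, a i ≤ x i ∧ x i ≤ b i) ∧ ∑ i, x i = γ} |
        ∀ y ∈ {x : Fin n → ℝ | (∀ i, a i ≤ x i ∧ x i ≤ b i) ∧ ∑ i, x i = γ}, ℓ y ≤ ℓ x}
    = {x | (∀ l ∉ K, x l = u l) ∧ (∀ k ∈ K, a k ≤ x k ∧ x k ≤ b k) ∧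
          (∑ k ∈ K, x k) + (∑ l ∈ Kᶜ, u l) = γ} := by
  classical
  set c : Fin n → ℝ := fun i => ℓ (fun j => if i = j then (1:ℝ) else 0) with hc
  have hcK' : ∀ i ∈ K, c i = lam := hcK
  have hu' : ∀ l ∉ K, (lam < c l ∧ u l = b l) ∨ (c l < lam ∧ u l = a l) := hu
  clear hcK hu
  have hℓ : ∀ x : Fin n → ℝ, ℓ x = ∑ i, x i * c i := by
    intro x
    rw [LinearMap.pi_apply_eq_sum_univ]
    simp [smul_eq_mul, hc]
  have key : ∀ x : Fin n → ℝ, ∑ i, x i = γ →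
      ℓ x = lam * γ + ∑ l ∈ Kᶜ, x l * (c l - lam) := by
    intro x hx
    have h1 : ∑ i, x i * c i = ∑ i, (x i * (c i - lam) + x i * lam) :=
      Finset.sum_congr rfl (fun i _ => by ring)
    have h2 : ∑ k ∈ K, x k * (c k - lam) = 0 :=
      Finset.sum_eq_zero (fun k hk => by rw [hcK' k hk, sub_self, mul_zero])
    rw [hℓ, h1, Finset.sum_add_distrib, ← Finset.sum_mul, hx,
      ← Finset.sum_add_sum_compl K (fun i => x i * (c i - lam)), h2, zero_add]
    ring
  have hterm : ∀ x : Fin n → ℝ, (∀ i, a i ≤ x i ∧ x i ≤ b i) →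
      ∀ l ∈ Kᶜ, x l * (c l - lam) ≤ u l * (c l - lam) := by
    intro x hx l hl
    rcases hu' l (Finset.mem_compl.mp hl) with ⟨h1, h2⟩ | ⟨h1, h2⟩
    · rw [h2]
      exact mul_le_mul_of_nonneg_right (hx l).2 (by linarith)
    · rw [h2]
      exact mul_le_mul_of_nonpos_right (hx l).1 (by linarith)
  have hx0val : ℓ x0 = lam * γ + ∑ l ∈ Kᶜ, u l * (c l - lam) := by
    rw [key x0 hx0.2]
    congr 1
    exact Finset.sum_congr rfl (fun l hl => by rw [hx0u l (Finset.mem_compl.mp hl)])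
  have hM : ∀ y : Fin n → ℝ, ((∀ i, a i ≤ y i ∧ y i ≤ b i) ∧ ∑ i, y i = γ) →
      ℓ y ≤ ℓ x0 := by
    intro y hy
    rw [key y hy.2, hx0val]
    exact add_le_add_right (Finset.sum_le_sum (hterm y hy.1)) _
  ext x
  simp only [Set.mem_setOf_eq, Set.mem_sep_iff]
  constructor
  · rintro ⟨hxD, hmax⟩
    have hxval : ℓ x = ℓ x0 := le_antisymm (hM x hxD) (hmax x0 hx0)
    have hsum : ∑ l ∈ Kᶜ, x l * (c l - lam) = ∑ l ∈ Kᶜ, u l * (c l - lam) := by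
      have := hxval
      rw [key x hxD.2, hx0val] at this
      linarith
    have hfix : ∀ l ∉ K, x l = u l := by
      intro l hl
      have hl' : l ∈ Kᶜ := Finset.mem_compl.mpr hl
      have := (Finset.sum_eq_sum_iff_of_le (hterm x hxD.1)).mp hsum l hl'
      rcases hu' l hl with ⟨h1, _⟩ | ⟨h1, _⟩ <;>
        exact mul_right_cancel₀ (by intro h; simp [sub_eq_zero] at h; linarith) this
    refine ⟨hfix, fun k _ => hxD.1 k, ?_⟩
    have : ∑ l ∈ Kᶜ, u l = ∑ l ∈ Kᶜ, x l :=
      Finset.sum_congr rfl (fun l hl => (hfix l (Finset.mem_compl.mp hl)).symm)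
    rw [this, Finset.sum_add_sum_compl, hxD.2]
  · rintro ⟨hfix, hbox, hsum⟩
    have hxD : (∀ i, a i ≤ x i ∧ x i ≤ b i) ∧ ∑ i, x i = γ := by
      constructor
      · intro i
        by_cases hi : i ∈ K
        · exact hbox i hi
        · rw [hfix i hi]
          rcases hu' i hi with ⟨_, h2⟩ | ⟨_, h2⟩ <;> rw [h2] <;>
            exact ⟨by linarith [hab i], by linarith [hab i]⟩
      · have : ∑ l ∈ Kᶜ, x l = ∑ l ∈ Kᶜ, u l :=
          Finset.sum_congr rfl (fun l hl => hfix l (Finset.mem_compl.mp hl))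
        rw [← Finset.sum_add_sum_compl K, this, hsum]
    refine ⟨hxD, fun y hy => ?_⟩
    have hxval : ℓ x = ℓ x0 := by
      rw [key x hxD.2, hx0val]
      congr 1
      exact Finset.sum_congr rfl (fun l hl => by rw [hfix l (Finset.mem_compl.mp hl)])
    rw [hxval]
    exact hM y hy

private lemma face_exchange {n : ℕ} {a b : Fin n → ℝ} {γ : ℝ}
    (ℓ : (Fin n → ℝ) →ₗ[ℝ] ℝ) {x0 : Fin n → ℝ}
    (hx0 : (∀ i, a i ≤ x0 i ∧ x0 i ≤ b i) ∧ ∑ i, x0 i = γ)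
    (hmax : ∀ y : Fin n → ℝ, ((∀ i, a i ≤ y i ∧ y i ≤ b i) ∧ ∑ i, y i = γ) → ℓ y ≤ ℓ x0)
    {i j : Fin n} (hij : i ≠ j) (hi : x0 i < b i) (hj : a j < x0 j) :
    ℓ (fun k => if i = k then (1:ℝ) else 0) ≤ ℓ (fun k => if j = k then (1:ℝ) else 0) := by
  classical
  set ε : ℝ := min (b i - x0 i) (x0 j - a j) with hε
  have hε0 : 0 < ε := lt_min (by linarith) (by linarith)
  set ei : Fin n → ℝ := fun k => if i = k then (1:ℝ) else 0 with hei
  set ej : Fin n → ℝ := fun k => if j = k then (1:ℝ) else 0 with hej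
  set y : Fin n → ℝ := x0 + ε • ei - ε • ej with hy
  have hyk : ∀ k, y k = x0 k + ε * ei k - ε * ej k := fun k => rfl
  have hyi : y i = x0 i + ε := by
    rw [hyk, hei, hej]; simp [hij.symm]
  have hyj : y j = x0 j - ε := by
    rw [hyk, hei, hej]; simp [hij]
  have hyo : ∀ k, k ≠ i → k ≠ j → y k = x0 k := by
    intro k hki hkj
    rw [hyk, hei, hej]
    simp [Ne.symm hki, Ne.symm hkj]
  have hyD : (∀ k, a k ≤ y k ∧ y k ≤ b k) ∧ ∑ k, y k = γ := by
    constructor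
    · intro k
      by_cases hki : k = i
      · subst hki
        rw [hyi]
        constructor
        · linarith [(hx0.1 k).1]
        · have : ε ≤ b k - x0 k := min_le_left _ _
          linarith
      · by_cases hkj : k = j
        · subst hkj
          rw [hyj]
          constructor
          · have : ε ≤ x0 k - a k := min_le_right _ _
            linarith
          · linarith [(hx0.1 k).2]
        · rw [hyo k hki hkj]; exact hx0.1 k
    · have h1 : ∑ k, ei k = 1 := by simp [hei]
      have h2 : ∑ k, ej k = 1 := by simp [hej]
      have : ∑ k, y k = ∑ k, x0 k + ε * ∑ k, ei k - ε * ∑ k, ej k := by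
        rw [Finset.mul_sum, Finset.mul_sum, ← Finset.sum_add_distrib,
          ← Finset.sum_sub_distrib]
        exact Finset.sum_congr rfl (fun k _ => hyk k)
      rw [this, h1, h2, hx0.2]; ring
  have hval : ℓ y = ℓ x0 + ε * ℓ ei - ε * ℓ ej := by
    rw [hy, map_sub, map_add, map_smul, map_smul, smul_eq_mul, smul_eq_mul]
  have := hmax y hyD
  rw [hval] at this
  have h3 : ℓ ei ≤ ℓ ej := by nlinarith
  exact h3

/-- Kovačec–Kuhlmann–Riener, Lemma 4 (characterization of faces): a subset `F`
of `ℝⁿ` is a nonempty face of the polytope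
`D' = {x : aᵢ ≤ xᵢ ≤ bᵢ (∀ i), Σ xᵢ = γ}` if and only if it is nonempty and of
the form `{x : x_l = u_l (l ∈ Kᶜ), a_k ≤ x_k ≤ b_k (k ∈ K), Σ_{k∈K} x_k + Σ_{l∈Kᶜ} u_l = γ}`
for some `K ⊆ {1,…,n}` and `u_l ∈ {a_l, b_l}` for `l ∈ Kᶜ`. -/
theorem faces_of_polytope (n : ℕ) (a b : Fin n → ℝ) (hab : ∀ i, a i < b i) (γ : ℝ)
    (D' : Set (Fin n → ℝ))
    (hD' : D' = {x | (∀ i, a i ≤ x i ∧ x i ≤ b i) ∧ ∑ i, x i = γ})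
    (F : Set (Fin n → ℝ)) :
    (F.Nonempty ∧ ∃ ℓ : (Fin n → ℝ) →ₗ[ℝ] ℝ,
        F = {x ∈ D' | ∀ y ∈ D', ℓ y ≤ ℓ x}) ↔
    (F.Nonempty ∧ ∃ (K : Finset (Fin n)) (u : Fin n → ℝ),
        (∀ l ∉ K, u l = a l ∨ u l = b l) ∧
        F = {x | (∀ l ∉ K, x l = u l) ∧ (∀ k ∈ K, a k ≤ x k ∧ x k ≤ b k) ∧
          (∑ k ∈ K, x k) + (∑ l ∈ Kᶜ, u l) = γ}) := by
  classical
  subst hD'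
  constructor
  · rintro ⟨hne, ℓ, hF⟩
    refine ⟨hne, ?_⟩
    obtain ⟨x0, hx0F⟩ := hne
    have hx0m := hF ▸ hx0F
    obtain ⟨hx0D, hx0max⟩ := hx0m
    simp only [Set.mem_setOf_eq] at hx0D hx0max
    set c : Fin n → ℝ := fun i => ℓ (fun j => if i = j then (1:ℝ) else 0) with hc
    set S : Finset (Fin n) := Finset.univ.filter (fun i => x0 i < b i) with hS
    set lam : ℝ := if h : S.Nonempty then S.sup' h c else sInf (Set.range c) with hlam
    have P1 : ∀ i, x0 i < b i → c i ≤ lam := by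
      intro i hi
      have hiS : i ∈ S := by simp [hS, hi]
      have hne' : S.Nonempty := ⟨i, hiS⟩
      rw [hlam, dif_pos hne']
      exact Finset.le_sup' c hiS
    have P2 : ∀ j, a j < x0 j → lam ≤ c j := by
      intro j hj
      rw [hlam]
      split_ifs with h
      · apply Finset.sup'_le
        intro i hiS
        have hi : x0 i < b i := by simpa [hS] using hiS
        by_cases hij : i = j
        · subst hij; exact le_rfl
        · exact face_exchange ℓ ⟨hx0D.1, hx0D.2⟩ (fun y hy => hx0max y hy) hij hi hj
      · exact csInf_le (Set.Finite.bddBelow (Set.finite_range c)) ⟨j, rfl⟩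
    set K : Finset (Fin n) := Finset.univ.filter (fun i => c i = lam) with hK
    set u : Fin n → ℝ := fun l => if lam < c l then b l else a l with huu
    have hKmem : ∀ l, l ∉ K ↔ c l ≠ lam := by intro l; simp [hK]
    have hu : ∀ l ∉ K, (lam < c l ∧ u l = b l) ∨ (c l < lam ∧ u l = a l) := by
      intro l hl
      have hne'' : c l ≠ lam := (hKmem l).mp hl
      rcases lt_or_gt_of_ne hne'' with h | h
      · right
        exact ⟨h, by rw [huu]; simp [not_lt.mpr h.le]⟩
      · left
        exact ⟨h, by rw [huu]; simp [h]⟩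
    have hx0u : ∀ l ∉ K, x0 l = u l := by
      intro l hl
      rcases hu l hl with ⟨h1, h2⟩ | ⟨h1, h2⟩
      · rw [h2]
        by_contra hne''
        have : x0 l < b l := lt_of_le_of_ne (hx0D.1 l).2 hne''
        linarith [P1 l this]
      · rw [h2]
        by_contra hne''
        have : a l < x0 l := lt_of_le_of_ne (hx0D.1 l).1 (Ne.symm hne'')
        linarith [P2 l this]
    refine ⟨K, u, ?_, ?_⟩
    · intro l hl
      rcases hu l hl with ⟨_, h2⟩ | ⟨_, h2⟩
      · right; exact h2
      · left; exact h2
    · rw [hF]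
      exact face_core hab ℓ lam K u
        (fun i hi => by simpa [hK] using hi)
        hu x0 ⟨hx0D.1, hx0D.2⟩ hx0u
  · rintro ⟨hne, K, u, hu, hF⟩
    refine ⟨hne, ?_⟩
    set s : Fin n → ℝ := fun l => if u l = b l then 1 else -1 with hs
    set ℓ : (Fin n → ℝ) →ₗ[ℝ] ℝ :=
      ∑ l ∈ Kᶜ, s l • (LinearMap.proj l : (Fin n → ℝ) →ₗ[ℝ] ℝ) with hℓ
    have hcval : ∀ i : Fin n, ℓ (fun j => if i = j then (1:ℝ) else 0)
        = if i ∈ Kᶜ then s i else 0 := by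
      intro i
      rw [hℓ]
      simp only [LinearMap.coe_sum, Finset.sum_apply, LinearMap.smul_apply,
        LinearMap.proj_apply, smul_eq_mul]
      simp only [mul_ite, mul_one, mul_zero]
      exact Finset.sum_ite_eq Kᶜ i s
    have hcK : ∀ i ∈ K, ℓ (fun j => if i = j then (1:ℝ) else 0) = 0 := by
      intro i hi
      rw [hcval]
      simp [Finset.mem_compl, hi]
    have hu' : ∀ l ∉ K, ((0:ℝ) < ℓ (fun j => if l = j then (1:ℝ) else 0) ∧ u l = b l) ∨
        (ℓ (fun j => if l = j then (1:ℝ) else 0) < 0 ∧ u l = a l) := by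
      intro l hl
      rw [hcval, if_pos (Finset.mem_compl.mpr hl)]
      rcases hu l hl with h | h
      · right
        have hne'' : u l ≠ b l := by rw [h]; exact (hab l).ne
        refine ⟨?_, h⟩
        rw [hs]; simp [hne'']
      · left
        refine ⟨?_, h⟩
        rw [hs]; simp [h]
    obtain ⟨x0, hx0F⟩ := hne
    have hx0m := hF ▸ hx0F
    simp only [Set.mem_setOf_eq] at hx0m
    obtain ⟨hfix, hbox, hsum⟩ := hx0m
    have hx0D : (∀ i, a i ≤ x0 i ∧ x0 i ≤ b i) ∧ ∑ i, x0 i = γ := by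
      constructor
      · intro i
        by_cases hi : i ∈ K
        · exact hbox i hi
        · rw [hfix i hi]
          rcases hu i hi with h | h <;> rw [h] <;>
            exact ⟨by linarith [hab i], by linarith [hab i]⟩
      · have : ∑ l ∈ Kᶜ, x0 l = ∑ l ∈ Kᶜ, u l :=
          Finset.sum_congr rfl (fun l hl => hfix l (Finset.mem_compl.mp hl))
        rw [← Finset.sum_add_sum_compl K, this, hsum]
    have core := face_core hab ℓ 0 K u hcK hu' x0 hx0D hfix
    exact ⟨ℓ, hF.trans core.symm⟩
end

section
/- Let a_i < b_i (i = 1, …, n) and γ be real numbers, and let D' = {x ∈ ℝⁿ : a_i ≤ x_i ≤ b_i for all i, and x_1 + ⋯ + x_n = γ}. Let K ⊆ {1, …, n}, let u_l ∈ {a_l, b_l} for each l ∈ K^c = {1,…,n} \ K, and let F = {x ∈ ℝⁿ : x_l = u_l for all l ∈ K^c, a_k ≤ x_k ≤ b_k for all k ∈ K, Σ_{k∈K} x_k + Σ_{l∈K^c} u_l = γ} be nonempty. If moreover there exists a point x ∈ F with a_k < x_k < b_k for all k ∈ K (so that K^c is maximal in the sense that the inequality conditions can be simultaneously satisfied without equalities),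 then the affine dimension of F (the dimension of the affine hull of F) equals max(|K| − 1, 0). -/
set_option maxHeartbeats 1000000


/-- Kovačec–Kuhlmann–Riener, Lemma 4 (dimension of faces): if the face
`F = {x : x_l = u_l (l ∈ Kᶜ), a_k ≤ x_k ≤ b_k (k ∈ K), Σ_{k∈K} x_k + Σ_{l∈Kᶜ} u_l = γ}`
of the polytope `D'` is nonempty and contains a point whose `K`-coordinates
satisfy the inequalities strictly (so `Kᶜ` is maximal), then the affine
dimension of `F` (the dimension of the direction of its affine hull) is
`max(|K| − 1, 0)`, i.e. `|K| − 1` in truncated natural subtraction. -/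
theorem dimension_of_face (n : ℕ) (a b : Fin n → ℝ) (hab : ∀ i, a i < b i) (γ : ℝ)
    (K : Finset (Fin n)) (u : Fin n → ℝ)
    (hu : ∀ l ∉ K, u l = a l ∨ u l = b l)
    (F : Set (Fin n → ℝ))
    (hF : F = {x | (∀ l ∉ K, x l = u l) ∧ (∀ k ∈ K, a k ≤ x k ∧ x k ≤ b k) ∧
      (∑ k ∈ K, x k) + (∑ l ∈ Kᶜ, u l) = γ})
    (hstrict : ∃ x ∈ F, ∀ k ∈ K, a k < x k ∧ x k < b k) :
    Module.finrank ℝ (affineSpan ℝ F).direction = K.card - 1 := by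
  obtain ⟨x₀, hx₀F, hx₀⟩ := hstrict
  -- the linear map whose kernel is the direction
  set L1 : (Fin n → ℝ) →ₗ[ℝ] ((↥(Kᶜ) : Type) → ℝ) :=
    LinearMap.funLeft ℝ ℝ (fun l => (l : Fin n)) with hL1
  set L2 : (Fin n → ℝ) →ₗ[ℝ] ℝ := ∑ k ∈ K, LinearMap.proj k with hL2def
  set L : (Fin n → ℝ) →ₗ[ℝ] (((↥(Kᶜ) : Type) → ℝ) × ℝ) := L1.prod L2 with hLdef
  have hL2 : ∀ v : Fin n → ℝ, L2 v = ∑ k ∈ K, v k := by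
    intro v
    simp [hL2def]
  have hmem : ∀ v : Fin n → ℝ,
      v ∈ LinearMap.ker L ↔ (∀ l ∉ K, v l = 0) ∧ (∑ k ∈ K, v k = 0) := by
    intro v
    rw [LinearMap.mem_ker, hLdef, LinearMap.prod_apply]
    constructor
    · intro h
      have h1 : L1 v = 0 := congrArg Prod.fst h
      have h2 : L2 v = 0 := congrArg Prod.snd h
      rw [hL2] at h2
      refine ⟨fun l hl => ?_, h2⟩
      have := congrFun h1 ⟨l, Finset.mem_compl.mpr hl⟩
      simpa [hL1, LinearMap.funLeft] using this
    · rintro ⟨h1, h2⟩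
      have e1 : L1 v = 0 := by
        funext l
        have hl : (l : Fin n) ∉ K := Finset.mem_compl.mp l.2
        simpa [hL1, LinearMap.funLeft] using h1 l hl
      have e2 : L2 v = 0 := by rw [hL2]; exact h2
      rw [Prod.mk.injEq]; exact ⟨e1, e2⟩
  -- F membership unpacked
  have hx₀mem := hF ▸ hx₀F
  obtain ⟨hx₀u, hx₀ab, hx₀sum⟩ := hx₀mem
  have hdir : (affineSpan ℝ F).direction = LinearMap.ker L := by
    rw [direction_affineSpan]
    apply le_antisymm
    · rw [vectorSpan_def, Submodule.span_le]
      rintro v ⟨x, hx, y, hy, rfl⟩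
      rw [hF] at hx hy
      obtain ⟨hxu, hxab, hxsum⟩ := hx
      obtain ⟨hyu, hyab, hysum⟩ := hy
      rw [SetLike.mem_coe, hmem]
      constructor
      · intro l hl
        simp [hxu l hl, hyu l hl]
      · have : ∑ k ∈ K, (x - y) k = ∑ k ∈ K, x k - ∑ k ∈ K, y k := by
          simp [Finset.sum_sub_distrib]
        show ∑ k ∈ K, (x - y) k = 0
        rw [this]
        linarith
    · intro v hv
      rw [hmem] at hv
      obtain ⟨hv1, hv2⟩ := hv
      rcases K.eq_empty_or_nonempty with hK | hK
      · have : v = 0 := by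
          funext i
          exact hv1 i (by simp [hK])
        simp [this]
      · set M : ℝ := K.inf' hK (fun k => min (x₀ k - a k) (b k - x₀ k)) with hM
        have hMpos : 0 < M := by
          rw [hM, Finset.lt_inf'_iff]
          intro k hk
          have := hx₀ k hk
          exact lt_min (by linarith [this.1]) (by linarith [this.2])
        set ε : ℝ := M / (1 + ‖v‖) with hε
        have hden : (0:ℝ) < 1 + ‖v‖ := by positivity
        have hεpos : 0 < ε := div_pos hMpos hden
        have hkey : ∀ k ∈ K, |ε * v k| < M := by
          intro k hk
          have h1 : |ε * v k| = ε * |v k| := by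
            rw [abs_mul, abs_of_pos hεpos]
          have h2 : |v k| ≤ ‖v‖ := by
            simpa using norm_le_pi_norm v k
          have h3 : ε * ‖v‖ < ε * (1 + ‖v‖) := by nlinarith
          have h4 : ε * (1 + ‖v‖) = M := div_mul_cancel₀ M (ne_of_gt hden)
          calc |ε * v k| = ε * |v k| := h1
            _ ≤ ε * ‖v‖ := by nlinarith
            _ < M := by rw [← h4]; exact h3
        have hMle : ∀ k ∈ K, M ≤ min (x₀ k - a k) (b k - x₀ k) := by
          intro k hk
          exact Finset.inf'_le _ hk
        set y : Fin n → ℝ := x₀ + ε • v with hy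
        have hyF : y ∈ F := by
          rw [hF]
          refine ⟨fun l hl => ?_, fun k hk => ?_, ?_⟩
          · simp [hy, hv1 l hl, hx₀u l hl]
          · have hk1 := hkey k hk
            have hk2 := hMle k hk
            have := abs_lt.mp hk1
            have hm1 : M ≤ x₀ k - a k := le_trans hk2 (min_le_left _ _)
            have hm2 : M ≤ b k - x₀ k := le_trans hk2 (min_le_right _ _)
            constructor
            · simp only [hy, Pi.add_apply, Pi.smul_apply, smul_eq_mul]
              linarith [this.1]
            · simp only [hy, Pi.add_apply, Pi.smul_apply, smul_eq_mul]
              linarith [this.2]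
          · have : ∑ k ∈ K, y k = ∑ k ∈ K, x₀ k + ε * ∑ k ∈ K, v k := by
              simp [hy, Finset.sum_add_distrib, Finset.mul_sum]
            rw [this, hv2]
            simpa using hx₀sum
        have hvs : y -ᵥ x₀ ∈ vectorSpan ℝ F := vsub_mem_vectorSpan ℝ hyF hx₀F
        have : v = ε⁻¹ • (y -ᵥ x₀) := by
          rw [show y -ᵥ x₀ = y - x₀ from rfl, hy]
          simp [smul_smul, inv_mul_cancel₀ (ne_of_gt hεpos)]
        rw [this]
        exact Submodule.smul_mem _ _ hvs
  rw [hdir]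
  rcases K.eq_empty_or_nonempty with hK | hK
  · have hbot : LinearMap.ker L = ⊥ := by
      rw [Submodule.eq_bot_iff]
      intro v hv
      rw [hmem] at hv
      funext i
      exact hv.1 i (by simp [hK])
    rw [hbot, hK]
    simp
  · have hsurj : Function.Surjective L := by
      rintro ⟨f, c⟩
      refine ⟨fun i => if h : i ∈ K then c / K.card else f ⟨i, Finset.mem_compl.mpr h⟩, ?_⟩
      rw [hLdef, LinearMap.prod_apply, Prod.mk.injEq]
      constructor
      · funext l
        have hl : (l : Fin n) ∉ K := Finset.mem_compl.mp l.2
        simp [hL1, LinearMap.funLeft, hl]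
      · show L2 _ = c
        rw [hL2]
        have : ∀ k ∈ K, (if h : k ∈ K then c / K.card else f ⟨k, Finset.mem_compl.mpr h⟩)
            = c / K.card := by
          intro k hk; simp [hk]
        rw [Finset.sum_congr rfl this, Finset.sum_const, nsmul_eq_mul]
        field_simp
    have hrank := LinearMap.finrank_range_add_finrank_ker L
    rw [LinearMap.range_eq_top.mpr hsurj, finrank_top] at hrank
    have h1 : Module.finrank ℝ (Fin n → ℝ) = n := by simp
    have h2 : Module.finrank ℝ (((↥(Kᶜ) : Type) → ℝ) × ℝ) = (n - K.card) + 1 := by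
      rw [Module.finrank_prod, Module.finrank_self, Module.finrank_pi]
      simp [Finset.card_compl]
    rw [h1, h2] at hrank
    have hle : K.card ≤ n := by
      simpa using Finset.card_le_univ K
    have h1le : 1 ≤ K.card := Finset.Nonempty.card_pos hK
    omega
end

section
/- Let n ≥ 2, γ ∈ ℝ, let D = {x ∈ ℝⁿ : 0 ≤ x_i ≤ 1 for all i, x_1 + ⋯ + x_n = γ}, and let φ(x) = Σ_{j=0}^{n} c_j E_j(x) with real coefficients c_j such that c_j ≠ 0 for some j ≥ 2. If p ∈ D satisfies 0 < p_i < 1 for all i (i.e., p is an interior point of D relative to the hyperplane {x : x_1 + ⋯ + x_n = γ}) and p is a local extremum of φ on D, then p = (γ/n, γ/n, …, γ/n). -/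
open Finset Filter

namespace Foregger

variable {n : ℕ}

/-- elementary symmetric sum over a subset of the coordinates -/
noncomputable def esOn (s : Finset (Fin n)) (m : ℕ) (x : Fin n → ℝ) : ℝ :=
  ∑ t ∈ s.powersetCard m, ∏ i ∈ t, x i

noncomputable def psi (c : ℕ → ℝ) (x : Fin n → ℝ) (S : Finset (Fin n)) : ℝ :=
  ∑ j ∈ Finset.Icc S.card n, c j * esOn Sᶜ (j - S.card) x

noncomputable def coefA (c : ℕ → ℝ) (x v : Fin n → ℝ) (r : ℕ) : ℝ :=
  ∑ S ∈ powersetCard r (univ : Finset (Fin n)), (∏ i ∈ S, v i) * psi c x S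


lemma esOn_peel {s : Finset (Fin n)} {a : Fin n} (ha : a ∈ s) (m : ℕ) (x : Fin n → ℝ) :
    esOn s (m+1) x = esOn (s.erase a) (m+1) x + x a * esOn (s.erase a) m x := by
  classical
  obtain ⟨s', h1, rfl⟩ : ∃ s', a ∉ s' ∧ s = insert a s' :=
    ⟨s.erase a, notMem_erase _ _, (insert_erase ha).symm⟩
  rw [erase_insert h1, esOn, powersetCard_succ_insert h1]
  rw [sum_union]
  · congr 1
    rw [sum_image]
    · rw [esOn, mul_sum]
      refine sum_congr rfl fun t ht => ?_
      have hat : a ∉ t := fun h => h1 ((mem_powersetCard.1 ht).1 h)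
      rw [prod_insert hat]
    · intro t ht u hu h
      have hat : a ∉ t := fun h => h1 ((mem_powersetCard.1 ht).1 h)
      have hau : a ∉ u := fun h => h1 ((mem_powersetCard.1 hu).1 h)
      have := congrArg (Finset.erase · a) h
      simpa [erase_insert hat, erase_insert hau] using this
  · rw [disjoint_left]
    intro t ht ht2
    have hat : a ∉ t := fun h => h1 ((mem_powersetCard.1 ht).1 h)
    obtain ⟨u, hu, rfl⟩ := mem_image.1 ht2
    exact hat (mem_insert_self a u)

lemma esymm_add (x v : Fin n → ℝ) (j : ℕ) :
    esymm n j (fun i => x i + v i) =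
      ∑ S ∈ (univ : Finset (Fin n)).powerset.filter (fun S => S.card ≤ j),
        (∏ i ∈ S, v i) * esOn Sᶜ (j - S.card) x := by
  classical
  have L : esymm n j (fun i => x i + v i)
      = ∑ u ∈ powersetCard j (univ : Finset (Fin n)),
          ∑ S ∈ u.powerset, (∏ i ∈ S, v i) * ∏ i ∈ u \ S, x i := by
    refine sum_congr rfl fun u _ => ?_
    simpa [add_comm] using prod_add v x u
  have R : ∀ S : Finset (Fin n), (∏ i ∈ S, v i) * esOn Sᶜ (j - S.card) x
      = ∑ w ∈ powersetCard (j - S.card) Sᶜ, (∏ i ∈ S, v i) * ∏ i ∈ w, x i := by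
    intro S; rw [esOn, mul_sum]
  rw [L, sum_congr rfl fun S _ => R S, sum_sigma', sum_sigma']
  refine sum_nbij' (fun z => ⟨z.2, z.1 \ z.2⟩) (fun z => ⟨z.1 ∪ z.2, z.1⟩) ?_ ?_ ?_ ?_ ?_
  · rintro ⟨u, S⟩ h
    simp only [mem_sigma, mem_powersetCard, mem_powerset, mem_filter] at h ⊢
    obtain ⟨⟨hu, hcard⟩, hS⟩ := h
    refine ⟨⟨subset_univ _, by rw [← hcard]; exact card_le_card hS⟩, ?_, ?_⟩
    · intro i hi
      have hi := mem_sdiff.1 hi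
      simp [mem_compl, hi.2]
    · rw [card_sdiff_of_subset hS, hcard]
  · rintro ⟨S, w⟩ h
    simp only [mem_sigma, mem_powersetCard, mem_powerset, mem_filter] at h ⊢
    obtain ⟨⟨-, hcard⟩, hw, hwcard⟩ := h
    have hdisj : Disjoint S w := by
      rw [disjoint_right]; intro i hiw
      have := hw hiw; simp only [mem_compl] at this; exact this
    refine ⟨⟨subset_univ _, ?_⟩, subset_union_left⟩
    rw [card_union_of_disjoint hdisj, hwcard]
    omega
  · rintro ⟨u, S⟩ h
    simp only [mem_sigma, mem_powersetCard, mem_powerset] at h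
    have : S ∪ u \ S = u := union_sdiff_of_subset h.2
    simp [this]
  · rintro ⟨S, w⟩ h
    simp only [mem_sigma, mem_powersetCard, mem_powerset, mem_filter] at h
    have hdisj : Disjoint S w := by
      rw [disjoint_right]; intro i hiw
      have := h.2.1 hiw; simp only [mem_compl] at this; exact this
    simp [union_sdiff_cancel_left hdisj]
  · rintro ⟨u, S⟩ h
    rfl

lemma phi_expand (c : ℕ → ℝ) (x v : Fin n → ℝ) (t : ℝ) :
    ∑ j ∈ range (n+1), c j * esymm n j (fun i => x i + t * v i)
      = ∑ r ∈ range (n+1), coefA c x v r * t ^ r := by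
  classical
  have key : ∀ (S : Finset (Fin n)), ∏ i ∈ S, (t * v i) = t ^ S.card * ∏ i ∈ S, v i := by
    intro S; rw [prod_mul_distrib, prod_const]
  calc ∑ j ∈ range (n+1), c j * esymm n j (fun i => x i + t * v i)
      = ∑ j ∈ range (n+1), ∑ S ∈ (univ : Finset (Fin n)).powerset,
          if S.card ≤ j then (∏ i ∈ S, v i) * (c j * esOn Sᶜ (j - S.card) x) * t ^ S.card
          else 0 := by
        refine sum_congr rfl fun j _ => ?_
        rw [esymm_add x (fun i => t * v i) j, mul_sum, sum_filter]
        refine sum_congr rfl fun S _ => ?_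
        by_cases h : S.card ≤ j
        · simp only [h, if_true, key S]; ring
        · simp [h]
    _ = ∑ S ∈ (univ : Finset (Fin n)).powerset, ∑ j ∈ range (n+1),
          if S.card ≤ j then (∏ i ∈ S, v i) * (c j * esOn Sᶜ (j - S.card) x) * t ^ S.card
          else 0 := sum_comm
    _ = ∑ S ∈ (univ : Finset (Fin n)).powerset,
          (∏ i ∈ S, v i) * psi c x S * t ^ S.card := by
        refine sum_congr rfl fun S _ => ?_
        rw [← sum_filter]
        have hfil : (range (n+1)).filter (fun j => S.card ≤ j) = Finset.Icc S.card n := by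
          ext k; simp only [mem_filter, mem_range, Finset.mem_Icc, Nat.lt_succ_iff]; omega
        rw [hfil, psi, mul_sum, sum_mul]
    _ = ∑ r ∈ range (n+1), coefA c x v r * t ^ r := by
        have hcard : (univ : Finset (Fin n)).card = n := by simp
        rw [Finset.sum_powerset, hcard]
        refine sum_congr rfl fun r _ => ?_
        rw [coefA, sum_mul]
        refine sum_congr rfl fun S hS => ?_
        rw [(mem_powersetCard.1 hS).2]

lemma coeff_nonneg (N : ℕ) (a : ℕ → ℝ) (m : ℕ) (hm : 1 ≤ m) (hmN : m ≤ N)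
    (hsmall : ∀ s, 1 ≤ s → s < m → a s = 0)
    (hmin : ∀ᶠ t in nhds (0:ℝ), a 0 ≤ ∑ r ∈ range (N+1), a r * t ^ r) :
    0 ≤ a m := by
  set g : ℝ → ℝ := fun t => ∑ r ∈ Finset.Icc m N, a r * t ^ (r - m) with hg
  have hg0 : g 0 = a m := by
    rw [hg]
    simp only
    rw [Finset.sum_eq_single m]
    · simp
    · intro r hr hne
      have : 0 < r - m := by
        have := (Finset.mem_Icc.1 hr).1
        omega
      rw [zero_pow (by omega), mul_zero]
    · intro h
      exact absurd (Finset.mem_Icc.2 ⟨le_refl m, hmN⟩) h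
  have hfact : ∀ t : ℝ, (∑ r ∈ range (N+1), a r * t ^ r) = a 0 + t ^ m * g t := by
    intro t
    have h1 : range (N+1) = insert 0 (Finset.Icc 1 N) := by
      ext k; simp [Nat.lt_succ_iff]; omega
    rw [h1, Finset.sum_insert (by simp)]
    congr 1
    · simp
    · have h2 : ∑ r ∈ Finset.Icc 1 N, a r * t ^ r = ∑ r ∈ Finset.Icc m N, a r * t ^ r := by
        rw [← Finset.sum_subset (Finset.Icc_subset_Icc hm le_rfl)]
        intro r hr hnr
        have h3 := Finset.mem_Icc.1 hr
        have h4 : r < m := by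
          by_contra h5
          exact hnr (Finset.mem_Icc.2 ⟨by omega, h3.2⟩)
        rw [hsmall r h3.1 h4, zero_mul]
      rw [h2, hg, Finset.mul_sum]
      refine Finset.sum_congr rfl fun r hr => ?_
      have h3 := (Finset.mem_Icc.1 hr).1
      rw [← mul_assoc, mul_comm (t ^ m), mul_assoc, ← pow_add]
      congr 2
      omega
  have hgcont : Continuous g := by
    apply continuous_finset_sum
    intro r _
    exact continuous_const.mul (continuous_pow _)
  have hev : ∀ᶠ t in nhdsWithin (0:ℝ) (Set.Ioi 0), 0 ≤ g t := by
    filter_upwards [hmin.filter_mono nhdsWithin_le_nhds, self_mem_nhdsWithin] with t ht ht2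
    rw [hfact t] at ht
    have htpos : (0:ℝ) < t := ht2
    have : 0 ≤ t ^ m * g t := by linarith
    have hpow : 0 < t ^ m := pow_pos htpos m
    nlinarith
  have htend : Tendsto g (nhdsWithin (0:ℝ) (Set.Ioi 0)) (nhds (a m)) := by
    rw [← hg0]
    exact (hgcont.tendsto 0).mono_left nhdsWithin_le_nhds
  exact ge_of_tendsto htend hev

lemma dir_nonneg (γ : ℝ) (c : ℕ → ℝ) (p : Fin n → ℝ)
    (hpsum : ∑ i, p i = γ) (hint : ∀ i, 0 < p i ∧ p i < 1)
    (hmin : IsLocalMinOn (fun x => ∑ j ∈ range (n+1), c j * esymm n j x)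
      {x : Fin n → ℝ | (∀ i, 0 ≤ x i ∧ x i ≤ 1) ∧ ∑ i, x i = γ} p)
    (v : Fin n → ℝ) (hv : ∑ i, v i = 0)
    (m : ℕ) (hm : 1 ≤ m) (hmN : m ≤ n)
    (hsmall : ∀ s, 1 ≤ s → s < m → coefA c p v s = 0) :
    0 ≤ coefA c p v m := by
  set D : Set (Fin n → ℝ) := {x : Fin n → ℝ | (∀ i, 0 ≤ x i ∧ x i ≤ 1) ∧ ∑ i, x i = γ}
    with hD
  set φ : (Fin n → ℝ) → ℝ := fun x => ∑ j ∈ range (n+1), c j * esymm n j x with hφ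
  -- the curve stays in D for small t
  have hmem : ∀ᶠ t in nhds (0:ℝ), (fun i => p i + t * v i) ∈ D := by
    have hco : ∀ i : Fin n, ∀ᶠ t in nhds (0:ℝ), p i + t * v i ∈ Set.Ioo (0:ℝ) 1 := by
      intro i
      have hc : ContinuousAt (fun t : ℝ => p i + t * v i) 0 := by fun_prop
      have h0 : p i + (0:ℝ) * v i ∈ Set.Ioo (0:ℝ) 1 := by
        simpa using ⟨(hint i).1, (hint i).2⟩
      exact hc.eventually_mem (isOpen_Ioo.mem_nhds h0)
    have hall : ∀ᶠ t in nhds (0:ℝ), ∀ i, p i + t * v i ∈ Set.Ioo (0:ℝ) 1 :=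
      eventually_all.2 hco
    filter_upwards [hall] with t ht
    refine ⟨fun i => ⟨le_of_lt (ht i).1, le_of_lt (ht i).2⟩, ?_⟩
    rw [Finset.sum_add_distrib, hpsum, ← Finset.mul_sum, hv, mul_zero, add_zero]
  -- pull the local-min property along the curve
  have htd : Tendsto (fun t : ℝ => (fun i => p i + t * v i)) (nhds 0) (nhdsWithin p D) := by
    rw [tendsto_nhdsWithin_iff]
    constructor
    · have : Tendsto (fun t : ℝ => (fun i => p i + t * v i)) (nhds 0)
          (nhds (fun i => p i + (0:ℝ) * v i)) := by
        apply tendsto_pi_nhds.2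
        intro i
        exact (continuous_const.add ((continuous_id.mul continuous_const))).tendsto 0
      simpa using this
    · exact hmem
  have hev : ∀ᶠ t in nhds (0:ℝ), φ p ≤ φ (fun i => p i + t * v i) := htd.eventually hmin
  -- rewrite via the polynomial expansion
  have h0 : φ p = coefA c p v 0 := by
    have := phi_expand c p v 0
    simp only [zero_mul, add_zero, mul_zero] at this
    rw [hφ]
    simp only at this ⊢
    rw [this, Finset.sum_eq_single 0]
    · simp
    · intro r hr hne
      rw [zero_pow hne, mul_zero]
    · simp
  apply coeff_nonneg n (coefA c p v) m hm hmN hsmall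
  filter_upwards [hev] with t ht
  rw [← h0, ← phi_expand c p v t]
  exact ht

lemma coefA_sparse (c : ℕ → ℝ) (x v : Fin n → ℝ) (T : Finset (Fin n))
    (hv : ∀ i, i ∉ T → v i = 0) (r : ℕ) :
    coefA c x v r = ∑ S ∈ T.powersetCard r, (∏ i ∈ S, v i) * psi c x S := by
  rw [coefA, ← sum_subset (powersetCard_mono (subset_univ T))]
  intro S hS hnS
  have hst : ¬ S ⊆ T := fun h => hnS (mem_powersetCard.2 ⟨h, (mem_powersetCard.1 hS).2⟩)
  obtain ⟨i, hiS, hiT⟩ := not_subset.1 hst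
  rw [prod_eq_zero hiS (hv i hiT), zero_mul]

lemma coefA_one (c : ℕ → ℝ) (x v : Fin n → ℝ) :
    coefA c x v 1 = ∑ i, v i * psi c x {i} := by
  rw [coefA, powersetCard_one, sum_map]
  simp [Function.Embedding.coeFn_mk]

lemma psi_singleton (c : ℕ → ℝ) (x : Fin n → ℝ) (i : Fin n) :
    psi c x {i} = ∑ d ∈ range n, c (1+d) * esOn ({i}ᶜ) d x := by
  rw [psi, card_singleton, ← Finset.Ico_add_one_right_eq_Icc, Finset.sum_Ico_eq_sum_range]
  simp

lemma psi_pair (c : ℕ → ℝ) (x : Fin n → ℝ) {i k : Fin n} (hik : i ≠ k) :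
    psi c x {i, k} = ∑ e ∈ range (n - 1), c (2+e) * esOn (({i, k} : Finset (Fin n))ᶜ) e x := by
  rw [psi, card_pair hik, ← Finset.Ico_add_one_right_eq_Icc, Finset.sum_Ico_eq_sum_range]
  simp

lemma psi_diff (c : ℕ → ℝ) (x : Fin n → ℝ) (hn : 1 ≤ n) {i k : Fin n} (hik : i ≠ k) :
    psi c x {i} - psi c x {k} = (x k - x i) * psi c x {i, k} := by
  obtain ⟨m, rfl⟩ : ∃ m, n = m + 1 := ⟨n - 1, by omega⟩
  have hR : ({i}ᶜ : Finset (Fin (m+1))).erase k = ({i, k} : Finset (Fin (m+1)))ᶜ := by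
    ext a
    simp only [mem_erase, mem_compl, mem_singleton, mem_insert]
    tauto
  have hR' : ({k}ᶜ : Finset (Fin (m+1))).erase i = ({i, k} : Finset (Fin (m+1)))ᶜ := by
    ext a
    simp only [mem_erase, mem_compl, mem_singleton, mem_insert]
    tauto
  have hki : k ∈ ({i}ᶜ : Finset (Fin (m+1))) := by simp [hik.symm]
  have hik' : i ∈ ({k}ᶜ : Finset (Fin (m+1))) := by simp [hik]
  rw [psi_singleton, psi_singleton, psi_pair c x hik, ← sum_sub_distrib]
  rw [sum_range_succ']
  have h0 : c (1+0) * esOn ({i}ᶜ) 0 x - c (1+0) * esOn ({k}ᶜ) 0 x = 0 := by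
    simp [esOn]
  rw [h0, add_zero]
  have hm : (m + 1) - 1 = m := by omega
  rw [hm, mul_sum]
  refine sum_congr rfl fun e _ => ?_
  rw [esOn_peel hki e x, esOn_peel hik' e x, hR, hR']
  ring_nf

lemma key (hn : 2 ≤ n) (γ : ℝ) (c : ℕ → ℝ) (p : Fin n → ℝ)
    (hpsum : ∑ i, p i = γ) (hint : ∀ i, 0 < p i ∧ p i < 1)
    (hmin : IsLocalMinOn (fun x => ∑ j ∈ range (n+1), c j * esymm n j x)
      {x : Fin n → ℝ | (∀ i, 0 ≤ x i ∧ x i ≤ 1) ∧ ∑ i, x i = γ} p)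
    (i0 k0 : Fin n) (hne : p i0 ≠ p k0) :
    ∀ r, 2 ≤ r → r ≤ n → c r = 0 := by
  classical
  have hn1 : 1 ≤ n := by omega
  have dir := dir_nonneg γ c p hpsum hint hmin
  -- helper for sums of functions supported on two points
  have sum_two : ∀ (f : Fin n → ℝ) (i k : Fin n), i ≠ k →
      (∀ m, m ≠ i → m ≠ k → f m = 0) → ∑ m, f m = f i + f k := by
    intro f i k hik hz
    rw [← sum_subset (subset_univ ({i, k} : Finset (Fin n)))]
    · exact sum_pair hik
    · intro m _ hm
      simp only [mem_insert, mem_singleton] at hm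
      push_neg at hm
      exact hz m hm.1 hm.2
  -- Step A: all psi singletons are equal
  have hA1 : ∀ i k : Fin n, i ≠ k → 0 ≤ psi c p {i} - psi c p {k} := by
    intro i k hik
    set v : Fin n → ℝ := fun m => if m = i then 1 else if m = k then -1 else 0 with hvdef
    have hvi : v i = 1 := by simp [hvdef]
    have hvk : v k = -1 := by simp [hvdef, hik.symm]
    have hvz : ∀ m, m ≠ i → m ≠ k → v m = 0 := by
      intro m h1 h2; simp [hvdef, h1, h2]
    have hv : ∑ m, v m = 0 := by
      rw [sum_two v i k hik hvz, hvi, hvk]; ring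
    have h1 := dir v hv 1 le_rfl hn1 (by intro s hs1 hs2; omega)
    rw [coefA_one] at h1
    have : ∑ m, v m * psi c p {m} = psi c p {i} - psi c p {k} := by
      rw [sum_two (fun m => v m * psi c p {m}) i k hik
        (fun m h1 h2 => by show v m * psi c p {m} = 0; rw [hvz m h1 h2, zero_mul]), hvi, hvk]
      ring
    rwa [this] at h1
  have hA : ∀ i k : Fin n, psi c p {i} = psi c p {k} := by
    intro i k
    rcases eq_or_ne i k with rfl | hik
    · rfl
    · have h1 := hA1 i k hik
      have h2 := hA1 k i hik.symm
      linarith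
  -- cross pairs vanish
  have hcross : ∀ i k : Fin n, p i ≠ p k → psi c p {i, k} = 0 := by
    intro i k hpik
    have hik : i ≠ k := fun h => hpik (by rw [h])
    have h1 := psi_diff c p hn1 hik
    rw [hA i k, sub_self] at h1
    have h2 : p k - p i ≠ 0 := sub_ne_zero.2 (Ne.symm hpik)
    exact (mul_eq_zero.1 h1.symm).resolve_left h2
  -- coefA 1 vanishes for any admissible direction
  have hcoef1 : ∀ v : Fin n → ℝ, ∑ m, v m = 0 → coefA c p v 1 = 0 := by
    intro v hv
    rw [coefA_one]
    calc ∑ m, v m * psi c p {m} = ∑ m, v m * psi c p {i0} :=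
          sum_congr rfl fun m _ => by rw [hA m i0]
    _ = (∑ m, v m) * psi c p {i0} := by rw [sum_mul]
    _ = 0 := by rw [hv, zero_mul]
  -- pairs are ≤ 0
  have hpair_le : ∀ i k : Fin n, i ≠ k → psi c p {i, k} ≤ 0 := by
    intro i k hik
    set v : Fin n → ℝ := fun m => if m = i then 1 else if m = k then -1 else 0 with hvdef
    have hvi : v i = 1 := by simp [hvdef]
    have hvk : v k = -1 := by simp [hvdef, hik.symm]
    have hvz : ∀ m, m ≠ i → m ≠ k → v m = 0 := by
      intro m h1 h2; simp [hvdef, h1, h2]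
    have hv : ∑ m, v m = 0 := by
      rw [sum_two v i k hik hvz, hvi, hvk]; ring
    have h1 := dir v hv 2 (by omega) hn (by
      intro s hs1 hs2
      have : s = 1 := by omega
      rw [this]; exact hcoef1 v hv)
    have hsub : ∀ m, m ∉ ({i, k} : Finset (Fin n)) → v m = 0 := by
      intro m hm
      simp only [mem_insert, mem_singleton] at hm
      push_neg at hm
      exact hvz m hm.1 hm.2
    rw [coefA_sparse c p v {i, k} hsub 2] at h1
    have hcard : ({i, k} : Finset (Fin n)).card = 2 := card_pair hik
    rw [← hcard, powersetCard_self, sum_singleton, prod_pair hik, hvi, hvk] at h1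
    nlinarith
  -- helper for sums over three points
  have sum_three : ∀ (f : Fin n → ℝ) (i k w : Fin n), i ≠ k → i ≠ w → k ≠ w →
      (∀ m, m ≠ i → m ≠ k → m ≠ w → f m = 0) → ∑ m, f m = f i + f k + f w := by
    intro f i k w hik hiw hkw hz
    rw [← sum_subset (subset_univ ({i, k, w} : Finset (Fin n)))]
    · rw [sum_insert (by simp [hik, hiw]), sum_pair hkw]; ring
    · intro m _ hm
      simp only [mem_insert, mem_singleton] at hm
      push_neg at hm
      exact hz m hm.1 hm.2.1 hm.2.2
  -- Step C: all pairs vanish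
  have hpair0 : ∀ i k : Fin n, i ≠ k → psi c p {i, k} = 0 := by
    intro i k hik
    rcases ne_or_eq (p i) (p k) with hpik | hpik
    · exact hcross i k hpik
    · obtain ⟨w, hw⟩ : ∃ w, p w ≠ p i := by
        by_cases h : p i0 = p i
        · exact ⟨k0, fun hh => hne (by rw [h, hh])⟩
        · exact ⟨i0, h⟩
      have hwi : w ≠ i := fun h => hw (by rw [h])
      have hwk : w ≠ k := fun h => hw (by rw [h, ← hpik])
      set v : Fin n → ℝ := fun m => if m = i then 1 else if m = k then 1
        else if m = w then -2 else 0 with hvdef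
      have hvi : v i = 1 := by simp [hvdef]
      have hvk : v k = 1 := by simp [hvdef, hik.symm]
      have hvw : v w = -2 := by simp [hvdef, hwi, hwk]
      have hvz : ∀ m, m ≠ i → m ≠ k → m ≠ w → v m = 0 := by
        intro m h1 h2 h3; simp [hvdef, h1, h2, h3]
      have hv : ∑ m, v m = 0 := by
        rw [sum_three v i k w hik hwi.symm hwk.symm hvz, hvi, hvk, hvw]; ring
      have h1 := dir v hv 2 (by omega) hn (by
        intro s hs1 hs2
        have : s = 1 := by omega
        rw [this]; exact hcoef1 v hv)
      have hco : coefA c p v 2 = psi c p {i, k} := by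
        rw [coefA, Finset.sum_eq_single ({i, k} : Finset (Fin n))]
        · rw [prod_pair hik, hvi, hvk]; ring
        · intro S hS hSne
          obtain ⟨x1, x2, hx12, rfl⟩ := card_eq_two.1 (mem_powersetCard.1 hS).2
          rw [prod_pair hx12]
          by_cases hz1 : v x1 = 0
          · rw [hz1, zero_mul, zero_mul]
          by_cases hz2 : v x2 = 0
          · rw [hz2, mul_zero, zero_mul]
          have hx1 : x1 = i ∨ x1 = k ∨ x1 = w := by
            by_contra hc; push_neg at hc; exact hz1 (hvz x1 hc.1 hc.2.1 hc.2.2)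
          have hx2 : x2 = i ∨ x2 = k ∨ x2 = w := by
            by_contra hc; push_neg at hc; exact hz2 (hvz x2 hc.1 hc.2.1 hc.2.2)
          have hpsi0 : psi c p {x1, x2} = 0 := by
            rcases hx1 with rfl | rfl | rfl <;> rcases hx2 with rfl | rfl | rfl
            · exact absurd rfl hx12
            · exact absurd rfl hSne
            · exact hcross x1 x2 (fun h => hw (by linarith))
            · exact absurd (pair_comm x1 x2) hSne
            · exact absurd rfl hx12
            · exact hcross x1 x2 (fun h => hw (by linarith))
            · exact hcross x1 x2 (fun h => hw (by linarith))
            · exact hcross x1 x2 (fun h => hw (by linarith))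
            · exact absurd rfl hx12
          rw [hpsi0, mul_zero]
        · intro h
          exact absurd (mem_powersetCard.2 ⟨subset_univ _, card_pair hik⟩) h
      rw [hco] at h1
      exact le_antisymm (hpair_le i k hik) h1
  -- Step D: all psi of card ≥ 2 vanish
  have hpsi : ∀ r, 2 ≤ r → ∀ S : Finset (Fin n), S.card = r → psi c p S = 0 := by
    intro r
    induction r using Nat.strong_induction_on with
    | _ r ih =>
    intro hr2 S hScard
    rcases eq_or_lt_of_le hr2 with h2 | h3
    · obtain ⟨a, b, hab, rfl⟩ := card_eq_two.1 (show S.card = 2 by omega)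
      exact hpair0 a b hab
    · have hrn : r ≤ n := by
        rw [← hScard]
        calc S.card ≤ (univ : Finset (Fin n)).card := card_le_card (subset_univ S)
        _ = n := by simp
      obtain ⟨a, ha⟩ := card_pos.1 (show 0 < S.card by omega)
      obtain ⟨b, hb⟩ := card_pos.1 (show 0 < (S.erase a).card by
        rw [card_erase_of_mem ha, hScard]; omega)
      have hba : b ≠ a := ne_of_mem_erase hb
      have hbS : b ∈ S := mem_of_mem_erase hb
      have hsm : ∀ v : Fin n → ℝ, ∑ m, v m = 0 →
          ∀ s, 1 ≤ s → s < r → coefA c p v s = 0 := by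
        intro v hv s hs1 hs2
        rcases eq_or_lt_of_le hs1 with h1 | hs2'
        · rw [← h1]; exact hcoef1 v hv
        · rw [coefA]
          apply sum_eq_zero
          intro S' hS'
          rw [ih s hs2 (by omega) S' (mem_powersetCard.1 hS').2, mul_zero]
      set v1 : Fin n → ℝ := fun m => if m ∈ S then (if m = a then -((r:ℝ) - 1) else 1) else 0
        with hv1def
      have hv1z : ∀ m, m ∉ S → v1 m = 0 := by intro m hm; simp [hv1def, hm]
      have hv1a : v1 a = -((r:ℝ)-1) := by simp [hv1def, ha]
      have hv1rest : ∀ m ∈ S.erase a, v1 m = 1 := by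
        intro m hm
        simp [hv1def, mem_of_mem_erase hm, ne_of_mem_erase hm]
      have hcast1 : ((r - 1 : ℕ) : ℝ) = (r:ℝ) - 1 := by
        rw [Nat.cast_sub (by omega)]; simp
      have hsum1 : ∑ m, v1 m = 0 := by
        rw [← sum_subset (subset_univ S) (fun m _ hm => hv1z m hm),
          ← Finset.add_sum_erase S v1 ha, hv1a, sum_congr rfl hv1rest, sum_const,
          card_erase_of_mem ha, hScard, nsmul_eq_mul, hcast1]
        ring
      have hcoefr1 : coefA c p v1 r = -((r:ℝ)-1) * psi c p S := by
        rw [coefA_sparse c p v1 S hv1z r, ← hScard, powersetCard_self, sum_singleton, hScard]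
        congr 1
        rw [← Finset.mul_prod_erase S v1 ha, hv1a, prod_congr rfl hv1rest, prod_const_one,
          mul_one]
      have h1 := dir v1 hsum1 r (by omega) hrn (hsm v1 hsum1)
      rw [hcoefr1] at h1
      set v2 : Fin n → ℝ := fun m => if m ∈ S then
          (if m = a ∨ m = b then -((r:ℝ) - 2)/2 else 1) else 0 with hv2def
      have hv2z : ∀ m, m ∉ S → v2 m = 0 := by intro m hm; simp [hv2def, hm]
      have hv2a : v2 a = -((r:ℝ)-2)/2 := by simp [hv2def, ha]
      have hv2b : v2 b = -((r:ℝ)-2)/2 := by simp [hv2def, hbS]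
      have hv2rest : ∀ m ∈ (S.erase a).erase b, v2 m = 1 := by
        intro m hm
        have h1' : m ≠ b := ne_of_mem_erase hm
        have h2' : m ≠ a := ne_of_mem_erase (mem_of_mem_erase hm)
        have h3' : m ∈ S := mem_of_mem_erase (mem_of_mem_erase hm)
        simp [hv2def, h1', h2', h3']
      have hcard2 : ((S.erase a).erase b).card = r - 2 := by
        rw [card_erase_of_mem hb, card_erase_of_mem ha, hScard]
        omega
      have hcast2 : ((r - 2 : ℕ) : ℝ) = (r:ℝ) - 2 := by
        rw [Nat.cast_sub (by omega)]; simp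
      have hsum2 : ∑ m, v2 m = 0 := by
        rw [← sum_subset (subset_univ S) (fun m _ hm => hv2z m hm),
          ← Finset.add_sum_erase S v2 ha, ← Finset.add_sum_erase _ v2 hb,
          sum_congr rfl hv2rest, sum_const, hcard2, hv2a, hv2b, nsmul_eq_mul, hcast2]
        ring
      have hcoefr2 : coefA c p v2 r = (((r:ℝ)-2)/2)^2 * psi c p S := by
        rw [coefA_sparse c p v2 S hv2z r, ← hScard, powersetCard_self, sum_singleton, hScard]
        congr 1
        rw [← Finset.mul_prod_erase S v2 ha, ← Finset.mul_prod_erase _ v2 hb,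
          prod_congr rfl hv2rest, prod_const_one, hv2a, hv2b]
        ring
      have h2' := dir v2 hsum2 r (by omega) hrn (hsm v2 hsum2)
      rw [hcoefr2] at h2'
      have hr3 : (3:ℝ) ≤ (r:ℝ) := by exact_mod_cast (show 3 ≤ r by omega)
      have hle : psi c p S ≤ 0 := by nlinarith
      have hge : 0 ≤ psi c p S := by nlinarith
      linarith
  -- Step E: coefficients vanish, downward induction
  have hstep : ∀ r, 2 ≤ r → r ≤ n → (∀ j, r < j → j ≤ n → c j = 0) → c r = 0 := by
    intro r hr2 hrn hup
    obtain ⟨S, hSsub, hScard⟩ :=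
      exists_subset_card_eq (show r ≤ (univ : Finset (Fin n)).card by simp [hrn])
    have h0 := hpsi r hr2 S hScard
    rw [psi, hScard, Finset.sum_eq_single r] at h0
    · rw [Nat.sub_self] at h0
      have he : esOn Sᶜ 0 p = 1 := by simp [esOn]
      rw [he, mul_one] at h0
      exact h0
    · intro j hj hjne
      have hj' := Finset.mem_Icc.1 hj
      rw [hup j (by omega) hj'.2, zero_mul]
    · intro h
      exact absurd (Finset.mem_Icc.2 ⟨le_rfl, hrn⟩) h
  intro r hr2 hrn
  have hdown : ∀ k r, 2 ≤ r → r ≤ n → n ≤ r + k → c r = 0 := by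
    intro k
    induction k with
    | zero =>
      intro r h2 hn' hnk
      exact hstep r h2 hn' (fun j hj hjn => absurd hj (by omega))
    | succ k ihk =>
      intro r h2 hn' hnk
      exact hstep r h2 hn' (fun j hj hjn => ihk j (by omega) hjn (by omega))
  exact hdown (n - r) r hr2 hrn (by omega)


end Foregger


/-- Foregger's theorem: a real linear combination `φ` of elementary symmetric
polynomials of degree at least two, restricted to
`D = {x ∈ [0,1]ⁿ : Σ xᵢ = γ}`, can have an interior local extremum only at the
symmetric point `(γ/n, …, γ/n)`. -/
theorem interior_extremum_of_cube_slice (n : ℕ) (hn : 2 ≤ n) (γ : ℝ) (c : ℕ → ℝ)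
    (hdeg : ∃ j, 2 ≤ j ∧ j ≤ n ∧ c j ≠ 0)
    (φ : (Fin n → ℝ) → ℝ)
    (hφ : ∀ x, φ x = ∑ j ∈ Finset.range (n + 1), c j * esymm n j x)
    (D : Set (Fin n → ℝ))
    (hD : D = {x | (∀ i, 0 ≤ x i ∧ x i ≤ 1) ∧ ∑ i, x i = γ})
    (p : Fin n → ℝ) (hp : p ∈ D)
    (hint : ∀ i, 0 < p i ∧ p i < 1)
    (hext : IsLocalMinOn φ D p ∨ IsLocalMaxOn φ D p) :
    p = fun _ => γ / n := by
  classical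
  rw [hD] at hp
  obtain ⟨hp1, hp2⟩ := hp
  have hall : ∀ i k : Fin n, p i = p k := by
    by_contra hc
    push_neg at hc
    obtain ⟨i0, k0, hne⟩ := hc
    obtain ⟨j, hj2, hjn, hcj⟩ := hdeg
    cases hext with
    | inl hmn =>
      have hmin' : IsLocalMinOn (fun x => ∑ j ∈ Finset.range (n+1), c j * esymm n j x)
          {x : Fin n → ℝ | (∀ i, 0 ≤ x i ∧ x i ≤ 1) ∧ ∑ i, x i = γ} p := by
        have h1 : (fun x => ∑ j ∈ Finset.range (n+1), c j * esymm n j x) = φ :=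
          funext fun x => (hφ x).symm
        rw [h1, ← hD]
        exact hmn
      exact hcj (Foregger.key hn γ c p hp2 hint hmin' i0 k0 hne j hj2 hjn)
    | inr hmx =>
      have hmin' : IsLocalMinOn (fun x => ∑ j ∈ Finset.range (n+1), (-c j) * esymm n j x)
          {x : Fin n → ℝ | (∀ i, 0 ≤ x i ∧ x i ≤ 1) ∧ ∑ i, x i = γ} p := by
        have h1 : (fun x => ∑ j ∈ Finset.range (n+1), (-c j) * esymm n j x)
            = (fun x => -φ x) := by
          funext x
          rw [hφ x, ← Finset.sum_neg_distrib]
          exact Finset.sum_congr rfl fun j _ => by ring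
        rw [h1, ← hD]
        exact hmx.neg
      have h0 := Foregger.key hn γ (fun j => -c j) p hp2 hint hmin' i0 k0 hne j hj2 hjn
      simp only [neg_eq_zero] at h0
      exact hcj h0
  funext i
  have hsum : γ = (n : ℝ) * p i := by
    rw [← hp2, Finset.sum_congr rfl (fun k _ => hall k i), Finset.sum_const,
      Finset.card_univ, Fintype.card_fin, nsmul_eq_mul]
  have hn0 : (n:ℝ) ≠ 0 := Nat.cast_ne_zero.2 (by omega)
  rw [hsum]
  field_simp
end
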